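/- arXiv:1009.0065 — 9 statements merged into one kernel-verified Lean document; each statement's English description precedes it below -/
import Mathlib

section
/- If I is a proper uniform ideal on ℕ (contains all finite sets, is closed under subsets and finite unions, and ℕ ∉ I) which is c.c.c. over Fin, then I, viewed as a subset of the Cantor space P(ω), does not have the property of Baire. -/
open MeasureTheory Set

/-- Identify a subset of ℕ with a point of the Cantor space `ℕ → Bool`. -/
noncomputable def toCantor (x : Set ℕ) : ℕ → Bool :=
  fun n => @decide (n ∈ x) (Classical.dec _)

/-- A set has the property of Baire if its symmetric difference with some open set
is meager. -/
def HasBaireProperty {X : Type*} [TopologicalSpace X] (A : Set X) : Prop :=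
  ∃ U : Set X, IsOpen U ∧ IsMeagre (symmDiff A U)

namespace Stmt3Aux

/-- The basic cylinder of all points agreeing with `y` below `m`. -/
def Cyl (y : ℕ → Bool) (m : ℕ) : Set (ℕ → Bool) := {x | ∀ i < m, x i = y i}

lemma self_mem_cyl (y : ℕ → Bool) (m : ℕ) : y ∈ Cyl y m := fun _ _ => rfl

lemma cyl_anti {y : ℕ → Bool} {m m' : ℕ} (h : m ≤ m') : Cyl y m' ⊆ Cyl y m :=
  fun _ hx i hi => hx i (lt_of_lt_of_le hi h)

lemma isOpen_cyl (y : ℕ → Bool) (m : ℕ) : IsOpen (Cyl y m) := by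
  have : Cyl y m = Set.pi (Set.Iio m) (fun i => {y i}) := by
    ext x; simp [Cyl, Set.mem_pi]
  rw [this]
  exact isOpen_set_pi (Set.finite_Iio m) fun a _ => isOpen_discrete _

lemma exists_cyl_subset {U : Set (ℕ → Bool)} (hU : IsOpen U) {y : ℕ → Bool} (hy : y ∈ U) :
    ∃ m, Cyl y m ⊆ U := by
  obtain ⟨J, u, h1, h2⟩ := isOpen_pi_iff.mp hU y hy
  refine ⟨(J.sup id) + 1, fun x hx => h2 ?_⟩
  rw [Set.mem_pi]
  intro a ha
  have hax : x a = y a := hx a (Nat.lt_succ_of_le (Finset.le_sup (f := id) ha))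
  rw [hax]; exact (h1 a ha).2

lemma meagre_union {X : Type*} [TopologicalSpace X] {s t : Set X}
    (hs : IsMeagre s) (ht : IsMeagre t) : IsMeagre (s ∪ t) := by
  rw [IsMeagre, Set.compl_union]; exact Filter.inter_mem hs ht

lemma nwd_mono {X : Type*} [TopologicalSpace X] {s t : Set X}
    (h : IsNowhereDense t) (hst : s ⊆ t) : IsNowhereDense s := by
  rw [IsNowhereDense, ← Set.subset_empty_iff]
  calc interior (closure s) ⊆ interior (closure t) := interior_mono (closure_mono hst)
  _ = ∅ := h

lemma nwd_union {X : Type*} [TopologicalSpace X] {s t : Set X}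
    (hs : IsNowhereDense s) (ht : IsNowhereDense t) : IsNowhereDense (s ∪ t) := by
  have h1 : IsClosed (closure s) ∧ IsNowhereDense (closure s) := ⟨isClosed_closure, hs.closure⟩
  have h2 : IsClosed (closure t) ∧ IsNowhereDense (closure t) := ⟨isClosed_closure, ht.closure⟩
  rw [isClosed_isNowhereDense_iff_compl] at h1 h2
  have : IsClosed (closure s ∪ closure t) ∧ IsNowhereDense (closure s ∪ closure t) := by
    rw [isClosed_isNowhereDense_iff_compl, Set.compl_union]
    exact ⟨h1.1.inter h2.1, Dense.inter_of_isOpen_left h1.2 h2.2 h1.1⟩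
  exact nwd_mono this.2 (Set.union_subset_union subset_closure subset_closure)

lemma escape {F : Set (ℕ → Bool)} (hF : IsClosed F) (hnwd : IsNowhereDense F)
    (y : ℕ → Bool) (m : ℕ) :
    ∃ m', m ≤ m' ∧ ∃ z, (∀ i < m, z i = y i) ∧ Cyl z m' ∩ F = ∅ := by
  have hopen : IsOpen (Cyl y m \ F) := (isOpen_cyl y m).sdiff hF
  have hne : (Cyl y m \ F).Nonempty := by
    rw [Set.diff_nonempty]
    intro hsub
    have h1 : Cyl y m ⊆ interior (closure F) :=
      interior_maximal (hsub.trans subset_closure) (isOpen_cyl y m)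
    rw [hnwd] at h1
    exact h1 (self_mem_cyl y m)
  obtain ⟨z, hz⟩ := hne
  obtain ⟨m', hm'⟩ := exists_cyl_subset hopen hz
  refine ⟨max m m', le_max_left _ _, z, hz.1, ?_⟩
  rw [Set.eq_empty_iff_forall_notMem]
  intro x hx
  exact (hm' (cyl_anti (le_max_right m m') hx.1)).2 hx.2

lemma escapeAll {F : Set (ℕ → Bool)} (hF : IsClosed F) (hnwd : IsNowhereDense F) (m : ℕ) :
    ∃ m', m < m' ∧ ∀ y : ℕ → Bool, ∃ z, (∀ i < m, z i = y i) ∧ Cyl z m' ∩ F = ∅ := by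
  classical
  have h := fun p : Fin m → Bool =>
    escape hF hnwd (fun i => if h : i < m then p ⟨i, h⟩ else false) m
  choose M hM Z hZ1 hZ2 using h
  refine ⟨(Finset.univ.sup M) + m + 1, by omega, fun y => ?_⟩
  set p : Fin m → Bool := fun i => y i with hp
  refine ⟨Z p, fun i hi => ?_, ?_⟩
  · simpa [hi] using hZ1 p i hi
  · have hle : M p ≤ Finset.univ.sup M + m + 1 :=
      le_trans (Finset.le_sup (Finset.mem_univ p)) (by omega)
    rw [Set.eq_empty_iff_forall_notMem]
    intro x hx
    exact (Set.eq_empty_iff_forall_notMem.mp (hZ2 p)) x ⟨cyl_anti hle hx.1, hx.2⟩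

end Stmt3Aux

namespace Stmt3Aux

lemma meager_partition {I : Set (Set ℕ)}
    (hdown : ∀ x y : Set ℕ, y ∈ I → x ⊆ y → x ∈ I)
    (hT : IsMeagre (toCantor '' I)) :
    ∃ n : ℕ → ℕ, StrictMono n ∧
      ∀ a ∈ I, {k | Set.Ico (n k) (n (k + 1)) ⊆ a}.Finite := by
  classical
  obtain ⟨S, hSnwd, hScnt, hScov⟩ := isMeagre_iff_countable_union_isNowhereDense.mp hT
  obtain ⟨f, hf⟩ := Set.Countable.exists_eq_range (hScnt.insert ∅) (Set.insert_nonempty _ _)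
  set F : ℕ → Set (ℕ → Bool) := fun k => closure (⋃ i ∈ Finset.range (k + 1), f i) with hFdef
  have hFc : ∀ k, IsClosed (F k) := fun k => isClosed_closure
  have hfnwd : ∀ i, IsNowhereDense (f i) := by
    intro i
    have hi : f i ∈ insert ∅ S := hf ▸ Set.mem_range_self i
    rcases hi with h | h
    · rw [h]; exact isNowhereDense_empty
    · exact hSnwd _ h
  have hFnwd : ∀ k, IsNowhereDense (F k) := by
    intro k
    apply IsNowhereDense.closure
    induction k with
    | zero => simpa using hfnwd 0
    | succ k ih =>
      have : (⋃ i ∈ Finset.range (k + 1 + 1), f i) =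
          (⋃ i ∈ Finset.range (k + 1), f i) ∪ f (k + 1) := by
        rw [Finset.range_add_one]
        simp [Set.biUnion_insert, Set.union_comm]
      rw [this]
      exact nwd_union ih (hfnwd (k + 1))
  have hFmono : Monotone F := by
    intro k l hkl
    apply closure_mono
    refine Set.iUnion₂_subset fun i hi => ?_
    refine Set.subset_biUnion_of_mem (u := fun i => f i) (Finset.mem_range.mpr ?_)
    have := Finset.mem_range.mp hi
    omega
  have hcov : toCantor '' I ⊆ ⋃ k, F k := by
    intro x hx
    obtain ⟨t, htS, hxt⟩ := hScov hx
    obtain ⟨i, hi⟩ : ∃ i, f i = t := by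
      have h : t ∈ insert ∅ S := Set.mem_insert_of_mem _ htS
      rw [hf] at h; exact h
    exact Set.mem_iUnion.mpr ⟨i, subset_closure
      (Set.mem_biUnion (Finset.self_mem_range_succ i) (hi ▸ hxt))⟩
  have key : ∀ k m, ∃ m', m < m' ∧ ∀ y : ℕ → Bool, ∃ z : ℕ → Bool, (∀ i < m, z i = y i) ∧ Cyl z m' ∩ F k = ∅ :=
    fun k m => escapeAll (hFc k) (hFnwd k) m
  choose! next hnext1 z hz1 hz2 using key
  set n : ℕ → ℕ := fun k => Nat.rec 0 (fun k nk => next k nk) k with hn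
  have hnsucc : ∀ k, n (k + 1) = next k (n k) := fun k => rfl
  have hmono : StrictMono n := strictMono_nat_of_lt_succ (fun k => hnext1 k (n k))
  refine ⟨n, hmono, fun a ha => ?_⟩
  by_contra hinf
  have hinf' : Set.Infinite {k | Set.Ico (n k) (n (k + 1)) ⊆ a} := hinf
  set A := {k | Set.Ico (n k) (n (k + 1)) ⊆ a} with hA
  set g : ℕ → (ℕ → Bool) := fun k => Nat.rec (fun _ => false)
    (fun k gk => fun i => if i < n k then gk i else if k ∈ A then z k (n k) gk i else false) k with hg
  have hgsucc : ∀ k i, g (k + 1) i =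
      if i < n k then g k i else if k ∈ A then z k (n k) (g k) i else false := fun k i => rfl
  have hstab : ∀ k m, k + 1 ≤ m → ∀ i < n (k + 1), g m i = g (k + 1) i := by
    intro k m hm
    induction m with
    | zero => omega
    | succ m ih =>
      intro i hi
      rcases Nat.lt_or_ge (k + 1) (m + 1) with h | h
      · have hkm : k + 1 ≤ m := by omega
        have hin : i < n m := lt_of_lt_of_le hi (hmono.monotone hkm)
        rw [hgsucc m i, if_pos hin]
        exact ih hkm i hi
      · have hmk : m + 1 = k + 1 := by omega
        rw [hmk]
  set Y : ℕ → Bool := fun i => g (i + 1) i with hY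
  have hnk : ∀ k, k ≤ n k := fun k => hmono.le_apply
  have hYg : ∀ k, ∀ i < n (k + 1), Y i = g (k + 1) i := by
    intro k i hi
    rcases le_or_gt (k + 1) (i + 1) with h | h
    · exact hstab k (i + 1) h i hi
    · have h1 : i < n (i + 1) := lt_of_lt_of_le (Nat.lt_succ_self i) (hnk (i + 1))
      exact (hstab i (k + 1) (by omega) i h1).symm
  have hpos : ∀ i, ∃ k, n k ≤ i ∧ i < n (k + 1) := by
    intro i
    have hex : ∃ k, i < n (k + 1) := ⟨i, lt_of_lt_of_le (Nat.lt_succ_self i) (hnk (i + 1))⟩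
    refine ⟨Nat.find hex, ?_, Nat.find_spec hex⟩
    rcases Nat.eq_zero_or_pos (Nat.find hex) with h0 | h0
    · rw [h0]; exact Nat.zero_le i
    · obtain ⟨k', hk'⟩ : ∃ k', Nat.find hex = k' + 1 := ⟨Nat.find hex - 1, by omega⟩
      have := Nat.find_min hex (m := k') (by omega)
      rw [hk']
      omega
  set b : Set ℕ := {i | Y i = true} with hb
  have hba : b ⊆ a := by
    intro i hi
    obtain ⟨k, hk1, hk2⟩ := hpos i
    have hYi := hYg k i hk2
    rw [hgsucc k i, if_neg (by omega)] at hYi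
    by_cases hkA : k ∈ A
    · exact hkA (Set.mem_Ico.mpr ⟨hk1, hk2⟩)
    · rw [if_neg hkA] at hYi
      have hi' : Y i = true := hi
      rw [hi'] at hYi
      cases hYi
  have hbI : b ∈ I := hdown b a ha hba
  have htc : toCantor b = Y := by
    funext i
    show (@decide (i ∈ b) (Classical.dec _)) = Y i
    rcases Bool.eq_false_or_eq_true (Y i) with h2 | h2
    · rw [h2]
      exact @decide_eq_true (i ∈ b) (Classical.dec _) h2
    · rw [h2]
      exact @decide_eq_false (i ∈ b) (Classical.dec _) (fun hmem => by
        have hmem' : Y i = true := hmem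
        exact Bool.false_ne_true (h2.symm.trans hmem'))
  have hYT : Y ∈ toCantor '' I := ⟨b, hbI, htc⟩
  obtain ⟨j, hj⟩ := Set.mem_iUnion.mp (hcov hYT)
  have hnotF : ∀ k ∈ A, Y ∉ F k := by
    intro k hkA hYF
    have hmem : Y ∈ Cyl (z k (n k) (g k)) (n (k + 1)) := by
      intro i hi
      rw [hYg k i hi, hgsucc k i]
      by_cases h : i < n k
      · rw [if_pos h]
        exact (hz1 k (n k) (g k) i h).symm
      · rw [if_neg h, if_pos hkA]
    have := hz2 k (n k) (g k)
    rw [hnsucc k] at hmem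
    exact Set.eq_empty_iff_forall_notMem.mp this Y ⟨hmem, hYF⟩
  obtain ⟨k, hkA, hjk⟩ := hinf'.exists_gt j
  exact hnotF k hkA (hFmono (le_of_lt hjk) hj)

lemma not_countable_funs : ¬ Countable (ℕ → Bool) := by
  intro h
  obtain ⟨f, hf⟩ := exists_surjective_nat (ℕ → Bool)
  classical
  apply Function.cantor_surjective (fun n => {m | f n m = true})
  intro s
  obtain ⟨n, hn⟩ := hf (fun m => decide (m ∈ s))
  refine ⟨n, ?_⟩
  ext m
  simp [hn]

end Stmt3Aux

open Stmt3Aux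

/-- A proper uniform ideal on ℕ which is c.c.c. over Fin does not have the property of
Baire as a subset of the Cantor space. -/
theorem stmt_3 (I : Set (Set ℕ))
    (hfin : ∀ s : Set ℕ, s.Finite → s ∈ I)
    (hdown : ∀ x y : Set ℕ, y ∈ I → x ⊆ y → x ∈ I)
    (hunion : ∀ x ∈ I, ∀ y ∈ I, x ∪ y ∈ I)
    (hproper : Set.univ ∉ I)
    (hccc : ∀ A : Set (Set ℕ), (∀ x ∈ A, x.Infinite) →
      (A.Pairwise fun x y => (x ∩ y).Finite) → (∀ x ∈ A, x ∉ I) → A.Countable) :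
    ¬ HasBaireProperty (toCantor '' I) := by
  classical
  rintro ⟨U, hU, hM⟩
  set T := toCantor '' I with hTdef
  by_cases hmeager : IsMeagre T
  · -- Meager case: Talagrand partition + uncountable almost disjoint family
    obtain ⟨n, hmono, hfinpart⟩ := meager_partition hdown hmeager
    set E : ℕ → Set ℕ := fun k => Set.Ico (n k) (n (k + 1)) with hE
    have hEne : ∀ k, n k ∈ E k :=
      fun k => Set.mem_Ico.mpr ⟨le_refl _, hmono (Nat.lt_succ_self k)⟩
    have hEdisj : ∀ {k k' i : ℕ}, i ∈ E k → i ∈ E k' → k = k' := by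
      intro k k' i h1 h2
      rw [hE, Set.mem_Ico] at h1 h2
      rcases lt_trichotomy k k' with h | h | h
      · have := hmono.monotone (show k + 1 ≤ k' by omega)
        omega
      · exact h
      · have := hmono.monotone (show k' + 1 ≤ k by omega)
        omega
    set pre : (ℕ → Bool) → ℕ → ℕ :=
      fun f m => Encodable.encode (List.ofFn (fun j : Fin m => f j)) with hpre
    have hpreinj : ∀ f, Function.Injective (pre f) := by
      intro f m1 m2 h
      have h2 := Encodable.encode_injective h
      have h3 := congrArg List.length h2
      simpa using h3
    set B : (ℕ → Bool) → Set ℕ := fun f => Set.range (pre f) with hB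
    have hBinf : ∀ f, (B f).Infinite := fun f => Set.infinite_range_of_injective (hpreinj f)
    set xf : (ℕ → Bool) → Set ℕ := fun f => ⋃ k ∈ B f, E k with hxf
    have hmemB : ∀ f k, E k ⊆ xf f → k ∈ B f := by
      intro f k h
      obtain ⟨k', hk', hi⟩ := Set.mem_iUnion₂.mp (h (hEne k))
      rwa [hEdisj (hEne k) hi]
    have hxinf : ∀ f, (xf f).Infinite := by
      intro f
      apply Set.Infinite.mono (s := (fun k => n k) '' B f)
      · rintro _ ⟨k, hk, rfl⟩
        exact Set.mem_biUnion hk (hEne k)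
      · exact Set.Infinite.image (hmono.injective.injOn) (hBinf f)
    have hxnotI : ∀ f, xf f ∉ I := by
      intro f hfI
      apply hBinf f
      exact Set.Finite.subset (hfinpart (xf f) hfI)
        (fun k hk => Set.subset_biUnion_of_mem (u := fun k => E k) hk)
    have hBcap : ∀ f g, f ≠ g → (B f ∩ B g).Finite := by
      intro f g hne
      have hex : ∃ m, f m ≠ g m := by
        by_contra h
        push_neg at h
        exact hne (funext h)
      apply Set.Finite.subset ((Set.finite_Iic (Nat.find hex)).image (pre f))
      rintro i ⟨⟨m1, rfl⟩, ⟨m2, hm2⟩⟩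
      have hl := Encodable.encode_injective hm2
      have hlen : m2 = m1 := by simpa using congrArg List.length hl
      subst hlen
      rw [List.ofFn_inj] at hl
      refine ⟨m2, ?_, rfl⟩
      rw [Set.mem_Iic]
      by_contra hgt
      push_neg at hgt
      have := congrFun hl ⟨Nat.find hex, hgt⟩
      exact Nat.find_spec hex this.symm
    have hxcap : ∀ f g, f ≠ g → (xf f ∩ xf g).Finite := by
      intro f g hne
      apply Set.Finite.subset ((hBcap f g hne).biUnion (fun k _ => Set.finite_Ico _ _))
      rintro i ⟨hif, hig⟩
      obtain ⟨k, hk, hik⟩ := Set.mem_iUnion₂.mp hif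
      obtain ⟨k', hk', hik'⟩ := Set.mem_iUnion₂.mp hig
      cases hEdisj hik hik'
      exact Set.mem_biUnion ⟨hk, hk'⟩ hik
    have hxinj : Function.Injective xf := by
      intro f g h
      by_contra hne
      have h1 := hxcap f g hne
      rw [h, Set.inter_self] at h1
      exact hxinf g h1
    have hcnt : (Set.range xf).Countable := by
      apply hccc
      · rintro _ ⟨f, rfl⟩
        exact hxinf f
      · rintro _ ⟨f, rfl⟩ _ ⟨g, rfl⟩ hne
        exact hxcap f g (fun h => hne (by rw [h]))
      · rintro _ ⟨f, rfl⟩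
        exact hxnotI f
    have : Countable (ℕ → Bool) := by
      rw [← Set.countable_univ_iff]
      have := hcnt.preimage hxinj
      rwa [Set.preimage_range] at this
    exact not_countable_funs this
  · -- Non-meager case
    have hTU : T \ U ⊆ symmDiff T U := by
      rw [Set.symmDiff_def]
      exact Set.subset_union_left
    have hUT : U \ T ⊆ symmDiff T U := by
      rw [Set.symmDiff_def]
      exact Set.subset_union_right
    have hUne : U.Nonempty := by
      rcases Set.eq_empty_or_nonempty U with h | h
      · exfalso
        apply hmeager
        apply hM.mono
        intro x hx
        exact hTU ⟨hx, by rw [h]; exact Set.notMem_empty x⟩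
      · exact h
    obtain ⟨y, hy⟩ := hUne
    obtain ⟨m, hcylU⟩ := exists_cyl_subset hU hy
    set φ : (ℕ → Bool) → (ℕ → Bool) := fun x i => if i < m then x i else !(x i) with hφ
    have hφinv : ∀ x, φ (φ x) = x := by
      intro x
      funext i
      by_cases h : i < m <;> simp [hφ, h]
    have hφcont : Continuous φ := by
      apply continuous_pi
      intro i
      by_cases h : i < m
      · simpa [hφ, h] using continuous_apply i
      · simp only [hφ, if_neg h]
        exact Continuous.comp (g := fun b => !b) continuous_of_discreteTopology
          (continuous_apply i)
    have hφopen : IsOpenMap φ := by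
      intro V hV
      have himg : φ '' V = φ ⁻¹' V := by
        ext x
        constructor
        · rintro ⟨v, hv, rfl⟩
          rw [Set.mem_preimage, hφinv]
          exact hv
        · intro hx
          exact ⟨φ x, hx, hφinv x⟩
      rw [himg]
      exact hV.preimage hφcont
    have hφC : ∀ x, x ∈ Cyl y m → φ x ∈ Cyl y m := by
      intro x h i hi
      have := h i hi
      simpa [hφ, hi] using this
    have hS1 : IsMeagre (Cyl y m \ T) :=
      hM.mono (fun x hx => hUT ⟨hcylU hx.1, hx.2⟩)
    have hS2 : IsMeagre (φ ⁻¹' (Cyl y m \ T)) :=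
      IsMeagre.preimage_of_isOpenMap hφcont hφopen hS1
    have hS : IsMeagre ((Cyl y m \ T) ∪ φ ⁻¹' (Cyl y m \ T)) := meagre_union hS1 hS2
    have hdense : Dense (((Cyl y m \ T) ∪ φ ⁻¹' (Cyl y m \ T))ᶜ) :=
      dense_of_mem_residual hS
    obtain ⟨x, hxc, hxC⟩ := hdense.exists_mem_open (isOpen_cyl y m) ⟨y, self_mem_cyl y m⟩
    rw [Set.mem_compl_iff, Set.mem_union, not_or] at hxc
    obtain ⟨hx1, hx2⟩ := hxc
    have hxT : x ∈ T := by
      by_contra h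
      exact hx1 ⟨hxC, h⟩
    have hφxT : φ x ∈ T := by
      by_contra h
      exact hx2 ⟨hφC x hxC, h⟩
    obtain ⟨b1, hb1I, hb1⟩ := hxT
    obtain ⟨b2, hb2I, hb2⟩ := hφxT
    apply hproper
    apply hdown Set.univ (b1 ∪ b2 ∪ Set.Iio m)
    · exact hunion _ (hunion _ hb1I _ hb2I) _ (hfin _ (Set.finite_Iio m))
    · intro i _
      by_cases him : i < m
      · exact Or.inr (Set.mem_Iio.mpr him)
      · left
        have e1 : toCantor b1 i = x i := by rw [hb1]
        have e2 : toCantor b2 i = !(x i) := by rw [hb2]; simp [hφ, him]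
        rcases Bool.eq_false_or_eq_true (x i) with h | h
        · -- careful about branch order; fix after compile
          left
          have h1 : toCantor b1 i = true := by rw [e1, h]
          exact @of_decide_eq_true (i ∈ b1) (Classical.dec _) h1
        · right
          have h2 : toCantor b2 i = true := by rw [e2, h]; rfl
          exact @of_decide_eq_true (i ∈ b2) (Classical.dec _) h2
end

section
/- Let s be a finite subset of ℕ, let [s] = {x ⊆ ℕ : x ∩ {0, 1, ..., max(s)} = s} (with [s] = P(ω) if s = ∅), and let D_n (n ∈ ℕ) be dense open subsets of the Cantor space P(ω). Then there exist x, y ∈ [s] ∩ ⋂_{n ∈ ℕ} D_n such that x ∪ y is a cofinite subset of ℕ (indeed x ∪ y = ℕ \ ({0, ..., max(s)} \ s)). -/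
open MeasureTheory Set

/-- The block `{0, 1, ..., max s}` determined by a finite set `s` (empty if `s = ∅`). -/
def blk (s : Finset ℕ) : Set ℕ := if h : s.Nonempty then Set.Iic (s.max' h) else ∅

/-- The cylinder `[s] = {x ⊆ ℕ | x ∩ {0,...,max s} = s}` (all of `𝒫(ω)` if `s = ∅`). -/
def cylOf (s : Finset ℕ) : Set (Set ℕ) := {x : Set ℕ | x ∩ blk s = ↑s}

namespace Stmt4Aux

/-- A finite condition: values on a finite domain. -/
structure Cond where
  val : ℕ → Bool
  dom : Finset ℕ

/-- `d` extends `c`. -/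
def Cond.Ext (c d : Cond) : Prop := c.dom ⊆ d.dom ∧ ∀ n ∈ c.dom, d.val n = c.val n

/-- Cylinder of a condition. -/
def Cond.cyl (c : Cond) : Set (ℕ → Bool) := {f | ∀ n ∈ c.dom, f n = c.val n}

theorem Cond.Ext.trans' {a b c : Cond} (h1 : a.Ext b) (h2 : b.Ext c) : a.Ext c :=
  ⟨h1.1.trans h2.1, fun n hn => (h2.2 n (h1.1 hn)).trans (h1.2 n hn)⟩

theorem cyl_anti {c d : Cond} (h : c.Ext d) : d.cyl ⊆ c.cyl :=
  fun f hf n hn => (hf n (h.1 hn)).trans (h.2 n hn)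

theorem isOpen_cyl (c : Cond) : IsOpen c.cyl := by
  have : c.cyl = ⋂ n ∈ c.dom, {f : ℕ → Bool | f n = c.val n} := by
    ext f; simp [Cond.cyl]
  rw [this]
  refine isOpen_biInter_finset fun n _ => ?_
  have h2 : {f : ℕ → Bool | f n = c.val n} = (fun f : ℕ → Bool => f n) ⁻¹' {c.val n} := rfl
  rw [h2]
  exact IsOpen.preimage (continuous_apply n) (isOpen_discrete _)

theorem extend_into {D : Set (ℕ → Bool)} (hO : IsOpen D) (hd : Dense D) (c : Cond) :
    ∃ d : Cond, c.Ext d ∧ d.cyl ⊆ D := by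
  obtain ⟨z, hzD, hz⟩ := hd.exists_mem_open (isOpen_cyl c) ⟨c.val, fun n _ => rfl⟩
  obtain ⟨I, u, hu, hsub⟩ := isOpen_pi_iff.mp hO z hzD
  refine ⟨⟨z, c.dom ∪ I⟩, ⟨Finset.subset_union_left, fun n hn => hz n hn⟩, ?_⟩
  intro f hf
  apply hsub
  intro i hi
  have hfi : f i = z i := hf i (Finset.mem_union_right _ hi)
  rw [hfi]
  exact (hu i hi).2

/-- Extend a condition to cover `E`, setting new coordinates to `true`. -/
def Cond.fill (c : Cond) (E : Finset ℕ) : Cond :=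
  ⟨fun n => if n ∈ c.dom then c.val n else true, c.dom ∪ E⟩

theorem fill_ext (c : Cond) (E : Finset ℕ) : c.Ext (c.fill E) :=
  ⟨Finset.subset_union_left, fun n hn => if_pos hn⟩

theorem fill_dom (c : Cond) (E : Finset ℕ) : (c.fill E).dom = c.dom ∪ E := rfl

theorem fill_val_new (c : Cond) (E : Finset ℕ) {n : ℕ} (hn : n ∉ c.dom) :
    (c.fill E).val n = true := if_neg hn

/-- The fusion sequence: at stage `k`, first extend the first condition via `ext k`
(into `D k`), fill the second to cover it with `true`s, extend the second via `ext k`,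
then fill the first to cover it. -/
def seq (c0 : Cond) (ext : ℕ → Cond → Cond) : ℕ → Cond × Cond
  | 0 => (c0, c0)
  | (k+1) =>
    let p₁ := ext k (seq c0 ext k).1
    let q₂ := ext k ((seq c0 ext k).2.fill p₁.dom)
    (p₁.fill q₂.dom, q₂)

variable {c0 : Cond} {ext : ℕ → Cond → Cond}

theorem seq_succ (c0 : Cond) (ext : ℕ → Cond → Cond) (k : ℕ) :
    seq c0 ext (k+1) =
      ((ext k (seq c0 ext k).1).fill
          (ext k ((seq c0 ext k).2.fill (ext k (seq c0 ext k).1).dom)).dom,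
        ext k ((seq c0 ext k).2.fill (ext k (seq c0 ext k).1).dom)) := rfl

theorem seq_step_ext (hext : ∀ (k : ℕ) (d : Cond), d.Ext (ext k d)) (k : ℕ) :
    (seq c0 ext k).1.Ext (seq c0 ext (k+1)).1 ∧
    (seq c0 ext k).2.Ext (seq c0 ext (k+1)).2 := by
  rw [seq_succ]
  exact ⟨(hext k _).trans' (fill_ext _ _), (fill_ext _ _).trans' (hext k _)⟩

theorem seq_dom_eq (hext : ∀ (k : ℕ) (d : Cond), d.Ext (ext k d)) (k : ℕ) :
    (seq c0 ext k).1.dom = (seq c0 ext k).2.dom := by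
  induction k with
  | zero => rfl
  | succ k _ =>
    rw [seq_succ]
    dsimp only
    rw [fill_dom]
    apply Finset.union_eq_right.mpr
    calc (ext k (seq c0 ext k).1).dom
        ⊆ ((seq c0 ext k).2.fill (ext k (seq c0 ext k).1).dom).dom := by
          rw [fill_dom]; exact Finset.subset_union_right
      _ ⊆ _ := (hext k _).1

theorem seq_ext_le (hext : ∀ (k : ℕ) (d : Cond), d.Ext (ext k d)) {k m : ℕ} (h : k ≤ m) :
    (seq c0 ext k).1.Ext (seq c0 ext m).1 ∧
    (seq c0 ext k).2.Ext (seq c0 ext m).2 := by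
  induction m, h using Nat.le_induction with
  | base => exact ⟨⟨Finset.Subset.refl _, fun _ _ => rfl⟩, ⟨Finset.Subset.refl _, fun _ _ => rfl⟩⟩
  | succ m hkm ih =>
    exact ⟨ih.1.trans' (seq_step_ext hext m).1, ih.2.trans' (seq_step_ext hext m).2⟩

/-- The key invariant: outside the initial domain, the two conditions are never both
`false`. -/
theorem seq_inv (hext : ∀ (k : ℕ) (d : Cond), d.Ext (ext k d)) (k : ℕ) :
    ∀ n ∈ (seq c0 ext k).1.dom, n ∉ c0.dom →
      (seq c0 ext k).1.val n = true ∨ (seq c0 ext k).2.val n = true := by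
  induction k with
  | zero => exact fun n hn hn0 => absurd hn hn0
  | succ k ih =>
    intro n hn hn0
    set p := (seq c0 ext k).1 with hp
    set q := (seq c0 ext k).2 with hq
    set p₁ := ext k p with hp₁
    set q₁ := q.fill p₁.dom with hq₁
    set q₂ := ext k q₁ with hq₂
    have hseq : seq c0 ext (k+1) = (p₁.fill q₂.dom, q₂) := seq_succ c0 ext k
    rw [hseq] at hn ⊢
    dsimp only at hn ⊢
    by_cases h1 : n ∈ p₁.dom
    · by_cases h0 : n ∈ p.dom
      · -- old coordinate: values preserved, use IH
        have hdq : n ∈ q.dom := (seq_dom_eq hext k) ▸ h0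
        have hv1 : (p₁.fill q₂.dom).val n = p.val n := by
          rw [(fill_ext p₁ q₂.dom).2 n h1, (hext k p).2 n h0]
        have hv2 : q₂.val n = q.val n := by
          rw [(hext k q₁).2 n (Finset.mem_union_left _ hdq), (fill_ext q _).2 n hdq]
        rw [hv1, hv2]
        exact ih n h0 hn0
      · -- new in p₁: q₁ was filled with true there
        have hnq : n ∉ q.dom := fun h => h0 ((seq_dom_eq hext k) ▸ h)
        have hq1v : q₁.val n = true := fill_val_new q p₁.dom hnq
        have : q₂.val n = true := by
          rw [(hext k q₁).2 n (Finset.mem_union_right _ h1)]; exact hq1v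
        exact Or.inr this
    · -- new in the final fill: value true
      exact Or.inl (fill_val_new p₁ q₂.dom h1)

end Stmt4Aux

open Stmt4Aux

/-- Given a finite `s ⊆ ℕ` and dense open subsets `D n` of the Cantor space, there are
`x, y ∈ [s] ∩ ⋂ n, D n` with `x ∪ y` cofinite; indeed `x ∪ y = ℕ \ ({0,...,max s} \ s)`. -/
theorem stmt_4 (s : Finset ℕ) (D : ℕ → Set (ℕ → Bool))
    (hD : ∀ n, IsOpen (D n) ∧ Dense (D n)) :
    ∃ x y : Set ℕ, x ∈ cylOf s ∧ y ∈ cylOf s ∧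
      (∀ n, toCantor x ∈ D n) ∧ (∀ n, toCantor y ∈ D n) ∧
      (x ∪ y)ᶜ.Finite ∧ x ∪ y = Set.univ \ (blk s \ ↑s) := by
  classical
  choose ext hext hcyl using fun k c => extend_into (hD k).1 (hD k).2 c
  set blkF : Finset ℕ := if h : s.Nonempty then Finset.Iic (s.max' h) else ∅ with hblkF
  have hblk : blk s = ↑blkF := by
    rw [blk, hblkF]
    split <;> simp
  have hsblk : s ⊆ blkF := by
    intro m hm
    rw [hblkF, dif_pos ⟨m, hm⟩]
    exact Finset.mem_Iic.mpr (Finset.le_max' _ _ hm)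
  set c0 : Cond := ⟨fun n => decide (n ∈ s), blkF⟩ with hc0
  set c : ℕ → Cond × Cond := seq c0 ext with hc
  -- value consistency across stages
  have hcons1 : ∀ {k m n}, n ∈ (c k).1.dom → n ∈ (c m).1.dom →
      (c k).1.val n = (c m).1.val n := by
    intro k m n hk hm
    rcases le_total k m with h | h
    · exact ((seq_ext_le hext h).1.2 n hk).symm
    · exact (seq_ext_le hext h).1.2 n hm
  have hcons2 : ∀ {k m n}, n ∈ (c k).2.dom → n ∈ (c m).2.dom →
      (c k).2.val n = (c m).2.val n := by
    intro k m n hk hm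
    rcases le_total k m with h | h
    · exact ((seq_ext_le hext h).2.2 n hk).symm
    · exact (seq_ext_le hext h).2.2 n hm
  set X : Set ℕ := {n | ∀ k, n ∈ (c k).1.dom → (c k).1.val n = true} with hX
  set Y : Set ℕ := {n | ∀ k, n ∈ (c k).2.dom → (c k).2.val n = true} with hY
  have hmemX : ∀ {n k}, n ∈ (c k).1.dom → (n ∈ X ↔ (c k).1.val n = true) := by
    intro n k hn
    constructor
    · exact fun h => h k hn
    · intro hv m hm
      rw [hcons1 hm hn]
      exact hv
  have hmemY : ∀ {n k}, n ∈ (c k).2.dom → (n ∈ Y ↔ (c k).2.val n = true) := by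
    intro n k hn
    constructor
    · exact fun h => h k hn
    · intro hv m hm
      rw [hcons2 hm hn]
      exact hv
  have hdom0 : (c 0).1.dom = blkF := rfl
  have hdom0' : (c 0).2.dom = blkF := rfl
  have hval0 : ∀ n, (c 0).1.val n = decide (n ∈ s) := fun n => rfl
  have hval0' : ∀ n, (c 0).2.val n = decide (n ∈ s) := fun n => rfl
  -- membership in the cylinders cylOf s
  have hXcyl : X ∈ cylOf s := by
    rw [cylOf, Set.mem_setOf_eq, hblk]
    ext n
    simp only [Set.mem_inter_iff, Finset.mem_coe, Finset.coe_sort_coe, Set.mem_setOf_eq]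
    constructor
    · rintro ⟨hnX, hnb⟩
      have := (hmemX (hdom0 ▸ hnb)).mp hnX
      rw [hval0 n] at this
      exact of_decide_eq_true this
    · intro hns
      refine ⟨?_, hsblk hns⟩
      refine (hmemX (k := 0) (hdom0 ▸ hsblk hns)).mpr ?_
      rw [hval0 n]
      exact decide_eq_true hns
  have hYcyl : Y ∈ cylOf s := by
    rw [cylOf, Set.mem_setOf_eq, hblk]
    ext n
    simp only [Set.mem_inter_iff, Finset.mem_coe, Finset.coe_sort_coe, Set.mem_setOf_eq]
    constructor
    · rintro ⟨hnY, hnb⟩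
      have := (hmemY (hdom0' ▸ hnb)).mp hnY
      rw [hval0' n] at this
      exact of_decide_eq_true this
    · intro hns
      refine ⟨?_, hsblk hns⟩
      refine (hmemY (k := 0) (hdom0' ▸ hsblk hns)).mpr ?_
      rw [hval0' n]
      exact decide_eq_true hns
  -- membership in the dense open sets
  have htoX : ∀ {Z : Set ℕ} (hmemZ : ∀ {n k}, n ∈ (c k).1.dom → (n ∈ Z ↔ (c k).1.val n = true))
      (k : ℕ), toCantor Z ∈ (c (k+1)).1.cyl := by
    intro Z hmemZ k n hn
    have hiff := hmemZ hn
    show decide (n ∈ Z) = _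
    rcases h : (c (k+1)).1.val n with _ | _
    · rw [h] at hiff
      simp only [Bool.false_eq_true, iff_false] at hiff
      exact decide_eq_false hiff
    · rw [h] at hiff
      exact decide_eq_true (hiff.mpr rfl)
  have hXD : ∀ k, toCantor X ∈ D k := by
    intro k
    have h1 : (ext k (c k).1).Ext (c (k+1)).1 := by
      rw [hc, seq_succ]
      exact fill_ext _ _
    exact hcyl k (c k).1 (cyl_anti h1 (htoX hmemX k))
  have htoY : ∀ (k : ℕ), toCantor Y ∈ (c (k+1)).2.cyl := by
    intro k n hn
    have hiff := hmemY hn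
    show decide (n ∈ Y) = _
    rcases h : (c (k+1)).2.val n with _ | _
    · rw [h] at hiff
      simp only [Bool.false_eq_true, iff_false] at hiff
      exact decide_eq_false hiff
    · rw [h] at hiff
      exact decide_eq_true (hiff.mpr rfl)
  have hYD : ∀ k, toCantor Y ∈ D k := by
    intro k
    have h2 : (c (k+1)).2 = ext k ((c k).2.fill (ext k (c k).1).dom) := by
      rw [hc, seq_succ]
    exact hcyl k _ (h2 ▸ htoY k)
  -- the union
  have hunion : X ∪ Y = Set.univ \ (blk s \ ↑s) := by
    ext n
    simp only [Set.mem_union, Set.mem_diff, Set.mem_univ, true_and, hblk,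
      Finset.mem_coe, not_and, not_not]
    constructor
    · rintro (hn | hn) hnb
      · have := (hmemX (hdom0 ▸ hnb)).mp hn
        rw [hval0 n] at this
        exact of_decide_eq_true this
      · have := (hmemY (hdom0' ▸ hnb)).mp hn
        rw [hval0' n] at this
        exact of_decide_eq_true this
    · intro h
      by_cases hnb : n ∈ blkF
      · left
        have hns := h hnb
        refine (hmemX (k := 0) (hdom0 ▸ hsblk hns)).mpr ?_
        rw [hval0 n]
        exact decide_eq_true hns
      · -- n outside the block: if n ∉ X, then some stage decides it false, invariant gives Y
        by_cases hnX : n ∈ X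
        · exact Or.inl hnX
        · right
          rw [hX, Set.mem_setOf_eq] at hnX
          push_neg at hnX
          obtain ⟨k, hk, hkv⟩ := hnX
          have hn0 : n ∉ c0.dom := hnb
          have := seq_inv hext k n hk hn0
          rcases this with h1 | h2
          · exact absurd h1 hkv
          · exact (hmemY ((seq_dom_eq hext k) ▸ hk)).mpr h2
  refine ⟨X, Y, hXcyl, hYcyl, hXD, hYD, ?_, hunion⟩
  rw [hunion]
  have : (Set.univ \ (blk s \ ↑s))ᶜ = blk s \ ↑s := by
    rw [Set.compl_eq_univ_diff, Set.diff_diff_cancel_left (Set.subset_univ _)]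
  rw [this]
  exact (blkF.finite_toSet.subset (hblk ▸ Set.diff_subset)).subset (le_refl _)
end

section
/- Let D_n (n ∈ ℕ) be dense open subsets of the Cantor space P(ω). Then there exists an uncountable family (indeed a perfect set) of infinite subsets of ℕ, pairwise almost disjoint, all belonging to ⋂_{n ∈ ℕ} D_n. -/
open MeasureTheory Set

section Scheme

lemma getD_of_prefix {l₁ l₂ : List Bool} (h : l₁ <+: l₂) {m : ℕ} (hm : m < l₁.length) :
    l₁.getD m false = l₂.getD m false := by
  rw [List.getD_eq_getElem _ _ hm, List.getD_eq_getElem _ _ (hm.trans_le h.length_le)]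
  exact h.getElem hm

variable (D : ℕ → Set (ℕ → Bool)) (hD : ∀ n, IsOpen (D n) ∧ Dense (D n))


/-- Extension of a finite string into a dense open set: `v` extends `u` and the
cylinder of `v` is contained in `D`. -/
lemma extend_lemma (D : Set (ℕ → Bool)) (hO : IsOpen D) (hd : Dense D) (u : List Bool) :
    ∃ v : List Bool, u <+: v ∧
      ∀ x : ℕ → Bool, (∀ i, i < v.length → x i = v.getD i false) → x ∈ D := by
  classical
  set C : Set (ℕ → Bool) := {x | ∀ i, i < u.length → x i = u.getD i false} with hC
  have hCopen : IsOpen C := by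
    have : C = ⋂ i ∈ Finset.range u.length, {x : ℕ → Bool | x i = u.getD i false} := by
      ext x; simp [hC]
    rw [this]
    refine isOpen_biInter_finset (fun i _ => ?_)
    have : IsOpen ((fun x : ℕ → Bool => x i) ⁻¹' ({u.getD i false} : Set Bool)) :=
      (continuous_apply i).isOpen_preimage _ (isOpen_discrete _)
    simpa [Set.preimage] using this
  have hCne : C.Nonempty := ⟨fun i => u.getD i false, fun i _ => rfl⟩
  obtain ⟨x, hxD, hxC⟩ := hd.exists_mem_open hCopen hCne
  obtain ⟨I, t, hIt, hsub⟩ := isOpen_pi_iff.mp hO x hxD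
  set N : ℕ := max u.length ((I.sup id) + 1) with hN
  refine ⟨List.ofFn (fun j : Fin N => x j), ?_, ?_⟩
  · rw [List.prefix_iff_eq_take]
    apply List.ext_getElem
    · simp [hN]
    · intro i h1 h2
      simp only [List.getElem_take, List.getElem_ofFn]
      have := hxC i (by simpa using h1)
      rw [this, List.getD_eq_getElem]
  · intro y hy
    apply hsub
    intro i hi
    have hiN : i < N := by
      have : i ≤ I.sup id := Finset.le_sup (f := id) hi
      omega
    have : y i = x i := by
      have := hy i (by simpa using hiN)
      simpa [List.getD_eq_getElem, hiN] using this
    rw [this]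
    exact (hIt i hi).2

noncomputable def extF (n : ℕ) (u : List Bool) : List Bool :=
  Classical.choose (extend_lemma (D n) (hD n).1 (hD n).2 u)

lemma extF_prefix (n : ℕ) (u : List Bool) : u <+: extF D hD n u :=
  (Classical.choose_spec (extend_lemma (D n) (hD n).1 (hD n).2 u)).1

lemma extF_mem (n : ℕ) (u : List Bool) :
    ∀ x : ℕ → Bool, (∀ i, i < (extF D hD n u).length → x i = (extF D hD n u).getD i false) →
      x ∈ D n :=
  (Classical.choose_spec (extend_lemma (D n) (hD n).1 (hD n).2 u)).2

noncomputable def S (k : ℕ) : List Bool :=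
  if h : k ≤ 1 then [] else
    (extF D hD (Nat.log2 k - 1)
      (S (k / 2) ++ List.replicate ((S (k - 1)).length + 1 - (S (k / 2)).length) false))
      ++ [true]
  decreasing_by all_goals omega

lemma S_eq {k : ℕ} (hk : 2 ≤ k) :
    S D hD k = (extF D hD (Nat.log2 k - 1)
      (S D hD (k / 2) ++
        List.replicate ((S D hD (k - 1)).length + 1 - (S D hD (k / 2)).length) false))
      ++ [true] := by
  rw [S]; rw [dif_neg (by omega)]

lemma S_small {k : ℕ} (hk : k ≤ 1) : S D hD k = [] := by
  rw [S]; rw [dif_pos hk]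

lemma S_prefix {k : ℕ} (hk : 2 ≤ k) : S D hD (k / 2) <+: S D hD k := by
  rw [S_eq D hD hk]
  exact ((List.prefix_append _ _).trans (extF_prefix D hD _ _)).trans (List.prefix_append _ _)

lemma S_len {k : ℕ} (hk : 2 ≤ k) : (S D hD (k - 1)).length + 2 ≤ (S D hD k).length := by
  rw [S_eq D hD hk]
  have h1 := (extF_prefix D hD (Nat.log2 k - 1)
    (S D hD (k / 2) ++
      List.replicate ((S D hD (k - 1)).length + 1 - (S D hD (k / 2)).length) false)).length_le
  simp only [List.length_append, List.length_replicate, List.length_cons,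
    List.length_nil] at h1 ⊢
  omega

lemma S_mono : ∀ {j k : ℕ}, j ≤ k → (S D hD j).length ≤ (S D hD k).length := by
  have step : ∀ k : ℕ, (S D hD k).length ≤ (S D hD (k + 1)).length := by
    intro k
    rcases le_or_gt (k + 1) 1 with h | h
    · have hk0 : k = 0 := by omega
      subst hk0; simp [S_small]
    · have h2 := S_len D hD (show 2 ≤ k + 1 by omega)
      have : k + 1 - 1 = k := by omega
      rw [this] at h2
      omega
  intro j k h
  induction k with
  | zero => simp [Nat.le_zero.mp h]
  | succ n ih =>
    rcases Nat.lt_or_ge j (n + 1) with h' | h'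
    · exact (ih (by omega)).trans (step n)
    · have : j = n + 1 := by omega
      simp [this]

/-- New `true` positions of `S k` (beyond the parent) lie beyond `S (k-1)`. -/
lemma S_fresh {k m : ℕ} (hk : 2 ≤ k) (ht : (S D hD k).getD m false = true)
    (hm : (S D hD (k / 2)).length ≤ m) : (S D hD (k - 1)).length < m := by
  by_contra hcon
  push_neg at hcon
  have hpq : (S D hD (k / 2)).length ≤ (S D hD (k - 1)).length := S_mono D hD (by omega)
  have hul : (S D hD (k / 2) ++
      List.replicate ((S D hD (k - 1)).length + 1 - (S D hD (k / 2)).length) false).length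
      = (S D hD (k - 1)).length + 1 := by
    simp; omega
  have hmu : m < (S D hD (k / 2) ++
      List.replicate ((S D hD (k - 1)).length + 1 - (S D hD (k / 2)).length) false).length := by
    omega
  have humf : (S D hD (k / 2) ++
      List.replicate ((S D hD (k - 1)).length + 1 - (S D hD (k / 2)).length) false).getD m false
      = false := by
    rw [List.getD_append_right _ _ _ _ hm, List.getD_eq_getElem, List.getElem_replicate]
    simp at hmu ⊢
    omega
  have hpre2 : (S D hD (k / 2) ++
      List.replicate ((S D hD (k - 1)).length + 1 - (S D hD (k / 2)).length) false)
      <+: S D hD k := by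
    rw [S_eq D hD hk]
    exact (extF_prefix D hD _ _).trans (List.prefix_append _ _)
  have h1 := getD_of_prefix hpre2 hmu
  rw [humf, ht] at h1
  exact Bool.false_ne_true h1

lemma S_last {k : ℕ} (hk : 2 ≤ k) :
    (S D hD k).getD ((S D hD k).length - 1) false = true := by
  rw [S_eq D hD hk]
  simp

lemma S_cyl {k : ℕ} (hk : 2 ≤ k) (x : ℕ → Bool)
    (hx : ∀ i, i < (S D hD k).length → x i = (S D hD k).getD i false) :
    x ∈ D (Nat.log2 k - 1) := by
  apply extF_mem D hD (Nat.log2 k - 1)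
    (S D hD (k / 2) ++
      List.replicate ((S D hD (k - 1)).length + 1 - (S D hD (k / 2)).length) false) x
  intro i hi
  have hpre : extF D hD (Nat.log2 k - 1)
      (S D hD (k / 2) ++
        List.replicate ((S D hD (k - 1)).length + 1 - (S D hD (k / 2)).length) false)
      <+: S D hD k := by
    rw [S_eq D hD hk]; exact List.prefix_append _ _
  have hiS : i < (S D hD k).length := hi.trans_le hpre.length_le
  rw [hx i hiS]
  exact (getD_of_prefix hpre hi).symm

def idx (b : ℕ → Bool) : ℕ → ℕ
  | 0 => 1
  | n + 1 => 2 * idx b n + cond (b n) 1 0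

lemma idx_range (b : ℕ → Bool) : ∀ n, 2 ^ n ≤ idx b n ∧ idx b n < 2 ^ (n + 1) := by
  intro n
  induction n with
  | zero => simp [idx]
  | succ n ih =>
    cases hb : b n <;> simp [idx, hb, pow_succ] <;> omega

lemma idx_two (b : ℕ → Bool) (n : ℕ) : 2 ≤ idx b (n + 1) := by
  have := (idx_range b (n + 1)).1
  have h2 : (2:ℕ) ≤ 2 ^ (n + 1) := by
    calc (2:ℕ) = 2 ^ 1 := by norm_num
    _ ≤ 2 ^ (n + 1) := Nat.pow_le_pow_right (by norm_num) (by omega)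
  omega

lemma idx_div (b : ℕ → Bool) (n : ℕ) : idx b (n + 1) / 2 = idx b n := by
  cases hb : b n <;> simp [idx, hb] <;> omega

lemma idx_inj {b c : ℕ → Bool} : ∀ {n}, idx b n = idx c n → ∀ i, i < n → b i = c i := by
  intro n
  induction n with
  | zero => intro _ i hi; omega
  | succ n ih =>
    intro h i hi
    have hbc : idx b n = idx c n ∧ b n = c n := by
      cases hb : b n <;> cases hc : c n <;> simp [idx, hb, hc] at h ⊢ <;> omega
    rcases Nat.lt_or_ge i n with h' | h'
    · exact ih hbc.1 i h'
    · have : i = n := by omega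
      rw [this]; exact hbc.2

lemma idx_congr {b c : ℕ → Bool} : ∀ {n}, (∀ i, i < n → b i = c i) → idx b n = idx c n := by
  intro n
  induction n with
  | zero => intro _; rfl
  | succ n ih =>
    intro h
    have h1 : idx b n = idx c n := ih (fun i hi => h i (by omega))
    have h2 : b n = c n := h n (by omega)
    simp [idx, h1, h2]

lemma pow_window {a b v : ℕ} (h1 : 2 ^ a ≤ v) (h2 : v < 2 ^ (a + 1))
    (h3 : 2 ^ b ≤ v) (h4 : v < 2 ^ (b + 1)) : a = b := by
  by_contra h
  rcases Nat.lt_or_ge a b with h' | h'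
  · have : 2 ^ (a + 1) ≤ 2 ^ b := Nat.pow_le_pow_right (by norm_num) (by omega)
    omega
  · have hb : b < a := by omega
    have : 2 ^ (b + 1) ≤ 2 ^ a := Nat.pow_le_pow_right (by norm_num) (by omega)
    omega

lemma idx_log (b : ℕ → Bool) (n : ℕ) : Nat.log2 (idx b (n + 1)) - 1 = n := by
  have h := idx_range b (n + 1)
  rw [Nat.log2_eq_log_two, Nat.log_eq_of_pow_le_of_lt_pow h.1 h.2]
  omega

lemma S_chain (b : ℕ → Bool) (n : ℕ) : S D hD (idx b n) <+: S D hD (idx b (n + 1)) := by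
  have h := S_prefix D hD (idx_two b n)
  rwa [idx_div] at h

lemma S_chain' (b : ℕ → Bool) {m n : ℕ} (h : m ≤ n) :
    S D hD (idx b m) <+: S D hD (idx b n) := by
  induction n with
  | zero => have : m = 0 := by omega
            rw [this]
  | succ n ih =>
    rcases Nat.lt_or_ge m (n + 1) with h' | h'
    · exact (ih (by omega)).trans (S_chain D hD b n)
    · have : m = n + 1 := by omega
      rw [this]

lemma S_idx_grow (b : ℕ → Bool) (n : ℕ) :
    (S D hD (idx b n)).length < (S D hD (idx b (n + 1))).length := by
  have h2 := idx_two b n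
  have hle : (S D hD (idx b (n + 1) / 2)).length ≤ (S D hD (idx b (n + 1) - 1)).length :=
    S_mono D hD (by omega)
  have := S_len D hD h2
  rw [idx_div] at hle
  omega

lemma S_idx_len (b : ℕ → Bool) (n : ℕ) : n ≤ (S D hD (idx b n)).length := by
  induction n with
  | zero => omega
  | succ n ih => have := S_idx_grow D hD b n; omega

noncomputable def br (b : ℕ → Bool) (m : ℕ) : Bool := (S D hD (idx b (m + 1))).getD m false

lemma br_eq (b : ℕ → Bool) {m n : ℕ} (h : m < (S D hD (idx b n)).length) :
    br D hD b m = (S D hD (idx b n)).getD m false := by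
  have hm1 : m < (S D hD (idx b (m + 1))).length := by
    have := S_idx_len D hD b (m + 1); omega
  rw [br, getD_of_prefix (S_chain' D hD b (le_max_left (m+1) n)) hm1,
    getD_of_prefix (S_chain' D hD b (le_max_right (m+1) n)) h]

lemma br_spec {b : ℕ → Bool} {m : ℕ} (h : br D hD b m = true) :
    ∃ n, 1 ≤ n ∧ (S D hD (idx b n)).getD m false = true ∧
      (S D hD (idx b (n - 1))).length ≤ m ∧ m < (S D hD (idx b n)).length := by
  have hex : ∃ n, m < (S D hD (idx b n)).length :=
    ⟨m + 1, by have := S_idx_len D hD b (m + 1); omega⟩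
  classical
  set n := Nat.find hex with hn
  have hspec : m < (S D hD (idx b n)).length := Nat.find_spec hex
  have hn1 : 1 ≤ n := by
    rcases Nat.eq_zero_or_pos n with h0 | h0
    · exfalso
      have := hspec
      rw [h0] at this
      simp [idx, S_small D hD (by norm_num : (1:ℕ) ≤ 1)] at this
    · exact h0
  have hmin : (S D hD (idx b (n - 1))).length ≤ m := by
    have := Nat.find_min hex (show n - 1 < n by omega)
    omega
  refine ⟨n, hn1, ?_, hmin, hspec⟩
  rw [← br_eq D hD b hspec]
  exact h

lemma new_disj {j k m : ℕ} (hj : 2 ≤ j) (hk : 2 ≤ k) (hjk : j ≠ k)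
    (h1 : (S D hD j).getD m false = true) (h2 : (S D hD (j / 2)).length ≤ m)
    (h3 : m < (S D hD j).length)
    (h4 : (S D hD k).getD m false = true) (h5 : (S D hD (k / 2)).length ≤ m)
    (h6 : m < (S D hD k).length) : False := by
  rcases Nat.lt_or_ge j k with h | h
  · have hf := S_fresh D hD hk h4 h5
    have : (S D hD j).length ≤ (S D hD (k - 1)).length := S_mono D hD (by omega)
    omega
  · have hlt : k < j := by omega
    have hf := S_fresh D hD hj h1 h2
    have : (S D hD k).length ≤ (S D hD (j - 1)).length := S_mono D hD (by omega)
    omega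

lemma collide {b c : ℕ → Bool} {m : ℕ} (hb : br D hD b m = true) (hc : br D hD c m = true) :
    ∃ n, 1 ≤ n ∧ idx b n = idx c n ∧ m < (S D hD (idx b n)).length := by
  obtain ⟨n₁, hn₁, hv₁, hlo₁, hhi₁⟩ := br_spec D hD hb
  obtain ⟨n₂, hn₂, hv₂, hlo₂, hhi₂⟩ := br_spec D hD hc
  have hdiv₁ : idx b n₁ / 2 = idx b (n₁ - 1) := by
    conv_lhs => rw [show n₁ = (n₁ - 1) + 1 by omega]
    rw [idx_div]
  have hdiv₂ : idx c n₂ / 2 = idx c (n₂ - 1) := by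
    conv_lhs => rw [show n₂ = (n₂ - 1) + 1 by omega]
    rw [idx_div]
  have htwo₁ : 2 ≤ idx b n₁ := by
    have : n₁ = (n₁ - 1) + 1 := by omega
    rw [this]; exact idx_two b _
  have htwo₂ : 2 ≤ idx c n₂ := by
    have : n₂ = (n₂ - 1) + 1 := by omega
    rw [this]; exact idx_two c _
  have heq : idx b n₁ = idx c n₂ := by
    by_contra hne
    exact new_disj D hD htwo₁ htwo₂ hne hv₁ (by rw [hdiv₁]; exact hlo₁) hhi₁
      hv₂ (by rw [hdiv₂]; exact hlo₂) hhi₂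
  have hnn : n₁ = n₂ := by
    have r₁ := idx_range b n₁
    have r₂ := idx_range c n₂
    exact pow_window r₁.1 r₁.2 (by rw [heq]; exact r₂.1) (by rw [heq]; exact r₂.2)
  exact ⟨n₁, hn₁, by rw [hnn]; exact (hnn ▸ heq), hhi₁⟩

lemma cyl_open (g : ℕ → Bool) (N : ℕ) : IsOpen {x : ℕ → Bool | ∀ i, i < N → x i = g i} := by
  have : {x : ℕ → Bool | ∀ i, i < N → x i = g i} =
      ⋂ i ∈ Finset.range N, {x : ℕ → Bool | x i = g i} := by
    ext x; simp
  rw [this]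
  refine isOpen_biInter_finset (fun i _ => ?_)
  have : IsOpen ((fun x : ℕ → Bool => x i) ⁻¹' ({g i} : Set Bool)) :=
    (continuous_apply i).isOpen_preimage _ (isOpen_discrete _)
  simpa [Set.preimage] using this

lemma br_last (b : ℕ → Bool) (t : ℕ) :
    br D hD b ((S D hD (idx b (t + 1))).length - 1) = true := by
  have h2 := idx_two b t
  have hlen : 1 ≤ (S D hD (idx b (t + 1))).length := by
    have := S_len D hD h2; omega
  rw [br_eq D hD b (show (S D hD (idx b (t + 1))).length - 1 <
    (S D hD (idx b (t + 1))).length by omega)]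
  exact S_last D hD h2

lemma br_sep {b c : ℕ → Bool} {t : ℕ} (hbc : b t ≠ c t) :
    br D hD c ((S D hD (idx b (t + 1))).length - 1) = false := by
  set p := (S D hD (idx b (t + 1))).length - 1 with hp
  by_contra hcp
  have hcp' : br D hD c p = true := by
    cases h : br D hD c p
    · exact absurd h hcp
    · rfl
  have hbp : br D hD b p = true := br_last D hD b t
  obtain ⟨n, hn1, heq, hlt⟩ := collide D hD hbp hcp'
  have hnt : n ≤ t := by
    by_contra hgt
    exact hbc (idx_inj heq t (by omega))
  have hmono : (S D hD (idx b n)).length ≤ (S D hD (idx b t)).length :=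
    (S_chain' D hD b hnt).length_le
  have hgrow := S_idx_grow D hD b t
  omega

lemma br_inj : Function.Injective (br D hD) := by
  intro b c h
  by_contra hbc
  obtain ⟨t, ht⟩ := Function.ne_iff.mp hbc
  have h1 := br_last D hD b t
  have h2 := br_sep D hD ht
  rw [← congrFun h ((S D hD (idx b (t + 1))).length - 1)] at h2
  rw [h1] at h2
  simp at h2

lemma br_ad {b c : ℕ → Bool} {t : ℕ} (hbc : b t ≠ c t) :
    {m : ℕ | br D hD b m = true} ∩ {m : ℕ | br D hD c m = true} ⊆
      Set.Iio (S D hD (idx b (t + 1))).length := by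
  rintro m ⟨h1, h2⟩
  obtain ⟨n, hn1, heq, hlt⟩ := collide D hD h1 h2
  have hnt : n ≤ t := by
    by_contra hgt
    exact hbc (idx_inj heq t (by omega))
  have hmono : (S D hD (idx b n)).length ≤ (S D hD (idx b (t + 1))).length :=
    (S_chain' D hD b (by omega)).length_le
  simp only [Set.mem_Iio]
  omega

lemma br_infinite (b : ℕ → Bool) : {m : ℕ | br D hD b m = true}.Infinite := by
  apply Set.infinite_of_forall_exists_gt
  intro a
  refine ⟨(S D hD (idx b (a + 2))).length - 1, br_last D hD b (a + 1), ?_⟩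
  have h1 := S_idx_len D hD b (a + 2)
  omega

lemma br_memD (b : ℕ → Bool) (n : ℕ) : br D hD b ∈ D n := by
  have h := S_cyl D hD (idx_two b n) (br D hD b) (fun i hi => br_eq D hD b hi)
  rwa [idx_log] at h

lemma br_cont : Continuous (br D hD) := by
  apply continuous_pi
  intro m
  apply IsLocallyConstant.continuous
  rw [IsLocallyConstant.iff_exists_open]
  intro b
  refine ⟨{c : ℕ → Bool | ∀ i, i < m + 1 → c i = b i}, cyl_open b (m + 1),
    fun i _ => rfl, fun c hc => ?_⟩
  show br D hD c m = br D hD b m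
  rw [br, br, idx_congr (fun i hi => hc i hi)]

end Scheme

/-- Given dense open subsets `D n` of the Cantor space `ℕ → Bool`, there is an uncountable
(indeed perfect) set of points of the intersection `⋂ n, D n` which all code infinite
subsets of ℕ that are pairwise almost disjoint. -/
theorem stmt_5 (D : ℕ → Set (ℕ → Bool)) (hD : ∀ n, IsOpen (D n) ∧ Dense (D n)) :
    ∃ P : Set (ℕ → Bool), Perfect P ∧ ¬ P.Countable ∧
      (∀ x ∈ P, {n : ℕ | x n = true}.Infinite) ∧
      (P.Pairwise fun x y => ({n : ℕ | x n = true} ∩ {n : ℕ | y n = true}).Finite) ∧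
      (∀ x ∈ P, ∀ n : ℕ, x ∈ D n) := by
  refine ⟨Set.range (br D hD), ⟨?_, ?_⟩, ?_, ?_, ?_, ?_⟩
  · exact ((br_cont D hD).isClosedEmbedding (br_inj D hD)).isClosed_range
  · rintro x ⟨b, rfl⟩
    rw [accPt_iff_nhds]
    intro U hU
    obtain ⟨W, hWU, hWo, hxW⟩ := mem_nhds_iff.mp hU
    have hV : IsOpen (br D hD ⁻¹' W) := hWo.preimage (br_cont D hD)
    obtain ⟨I, t, hIt, hsub⟩ := isOpen_pi_iff.mp hV b hxW
    set N := I.sup id + 1 with hN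
    set c := fun i => if i < N then b i else !b i with hc
    have hcb : c ≠ b := by
      intro h
      have := congrFun h N
      simp [hc] at this
    have hcI : c ∈ Set.pi ↑I t := by
      intro i hi
      have hiN : i < N := by
        have : i ≤ I.sup id := Finset.le_sup (f := id) hi
        omega
      simp only [hc, if_pos hiN]
      exact (hIt i hi).2
    exact ⟨br D hD c, ⟨hWU (hsub hcI), Set.mem_range_self c⟩,
      fun h => hcb (br_inj D hD h)⟩
  · intro h
    have := h.to_subtype
    have hco : Countable (ℕ → Bool) :=
      Countable.of_equiv _ (Equiv.ofInjective _ (br_inj D hD)).symm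
    obtain ⟨g, hg⟩ := exists_surjective_nat (ℕ → Bool)
    obtain ⟨n, hn⟩ := hg (fun n => !g n n)
    have := congrFun hn n
    simp at this
  · rintro x ⟨b, rfl⟩
    exact br_infinite D hD b
  · rintro x ⟨b, rfl⟩ y ⟨c, rfl⟩ hxy
    have hbc : b ≠ c := fun h => hxy (by rw [h])
    obtain ⟨t, ht⟩ := Function.ne_iff.mp hbc
    exact (Set.finite_Iio _).subset (br_ad D hD ht)
  · rintro x ⟨b, rfl⟩ n
    exact br_memD D hD b n
end

section
/- Assume the Filter Dichotomy: for every uniform filter F on ℕ which is nonmeager as a subset of the Cantor space P(ω), there is a finite-to-one function h : ℕ → ℕ such that {h[x] : x ∈ F} is an ultrafilter on ℕ. Then every uniform filter on ℕ which is a universally measurable subset of P(ω) is meager. -/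
open MeasureTheory Set

/-- A subset of a topological space is universally measurable if it is measurable with
respect to (the completion of) every σ-finite Borel measure on the space. -/
def UMSet {X : Type*} [TopologicalSpace X] (A : Set X) : Prop :=
  letI : MeasurableSpace X := borel X
  ∀ μ : Measure X, SigmaFinite μ → NullMeasurableSet A μ

/-- A (proper, set-theoretic) filter on ℕ. -/
def IsSetFilter (F : Set (Set ℕ)) : Prop :=
  Set.univ ∈ F ∧ ∅ ∉ F ∧ (∀ x ∈ F, ∀ y : Set ℕ, x ⊆ y → y ∈ F) ∧
    (∀ x ∈ F, ∀ y ∈ F, x ∩ y ∈ F)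

/-- A uniform filter on ℕ: a filter containing all cofinite sets. -/
def IsUniformFilter (F : Set (Set ℕ)) : Prop :=
  IsSetFilter F ∧ ∀ x : Set ℕ, xᶜ.Finite → x ∈ F

/-- An ultrafilter on ℕ. -/
def IsUltrafilterSet (G : Set (Set ℕ)) : Prop :=
  IsSetFilter G ∧ ∀ x : Set ℕ, x ∈ G ∨ xᶜ ∈ G

/-- The family `{h[x] : x ∈ F}` of images of members of `F` under `h`. -/
def imgFam (h : ℕ → ℕ) (F : Set (Set ℕ)) : Set (Set ℕ) :=
  (fun x : Set ℕ => h '' x) '' F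

/-- `h` is finite-to-one if every fiber is finite. -/
def FinToOne (h : ℕ → ℕ) : Prop := ∀ n : ℕ, (h ⁻¹' {n}).Finite

/-- The Filter Dichotomy: every uniform nonmeager filter on ℕ is mapped by a finite-to-one
function to an ultrafilter. -/
def FilterDichotomy : Prop :=
  ∀ F : Set (Set ℕ), IsUniformFilter F → ¬ IsMeagre (toCantor '' F) →
    ∃ h : ℕ → ℕ, FinToOne h ∧ IsUltrafilterSet (imgFam h F)

/-!
Suppose `F` is a universally measurable uniform filter that is not meagre. The Filter Dichotomy
gives a finite-to-one `h` for which `U = {h[x] : x ∈ F}` is an ultrafilter, and `U` is uniform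
because `h` is finite-to-one. Reading points of `(ℤ/2)^ℕ` through their supports, the set
`{ω | supp ω ∈ U}` is the preimage of `F` under the continuous map `ω ↦ h⁻¹(supp ω)`, hence
measurable for the coin-tossing (Haar) measure. But it is invariant under finitely supported
translations, so by a zero-one law it has measure `0` or `1`, while translating by the constant
`1` maps it onto its complement, forcing measure `1/2`.
-/

open Function

lemma exists_finite_support_restrict_eq {G : Type*} [Zero G] (t : Finset ℕ) (g : t → G) :
    ∃ d : ℕ → G, (support d).Finite ∧ t.restrict d = g := by
  classical
  refine ⟨fun i => if hi : i ∈ t then g ⟨i, hi⟩ else 0, t.finite_toSet.subset ?_, ?_⟩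
  · intro i hi
    by_contra hit
    exact hi (dif_neg hit)
  · funext i
    exact dif_pos i.2

section ZeroOneLaw

variable {G : Type*} [AddCommGroup G] [MeasurableSpace G]

lemma measure_cylinder_singleton_eq (ν : Measure (ℕ → G))
    (hν : ∀ d : ℕ → G, (support d).Finite → ∀ s, ν ((d + ·) ⁻¹' s) = ν s)
    (t : Finset ℕ) (g : t → G) :
    ν (cylinder t {g}) = ν (cylinder t {0}) := by
  obtain ⟨d, hd, rfl⟩ := exists_finite_support_restrict_eq t g
  rw [← hν d hd]
  congr 1
  ext ω
  change t.restrict d + t.restrict ω = t.restrict d ↔ t.restrict ω = 0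
  exact add_eq_left

variable [DiscreteMeasurableSpace G] [Finite G]

lemma measure_cylinder_eq_ncard_mul (ν : Measure (ℕ → G))
    (hν : ∀ d : ℕ → G, (support d).Finite → ∀ s, ν ((d + ·) ⁻¹' s) = ν s)
    (t : Finset ℕ) (S : Set (t → G)) :
    ν (cylinder t S) = S.ncard * ν (cylinder t {0}) := by
  obtain ⟨T, rfl⟩ := S.toFinite.exists_finset_coe
  rw [cylinder, ← Set.biUnion_preimage_singleton, Finset.set_biUnion_coe,
    measure_biUnion_finset (Set.pairwiseDisjoint_fiber _ _)
      (fun g _ => MeasurableSet.cylinder t (measurableSet_singleton g))]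
  change ∑ g ∈ T, ν (cylinder t {g}) = _
  rw [Finset.sum_congr rfl fun g _ => measure_cylinder_singleton_eq ν hν t g, Finset.sum_const,
    nsmul_eq_mul, ncard_coe_finset]

lemma eq_measure_univ_smul_of_finitely_invariant (μ ν : Measure (ℕ → G))
    [IsProbabilityMeasure μ] [μ.IsAddLeftInvariant] [IsFiniteMeasure ν]
    (hν : ∀ d : ℕ → G, (support d).Finite → ∀ s, ν ((d + ·) ⁻¹' s) = ν s) :
    ν = ν univ • μ := by
  have hμ : ∀ d : ℕ → G, (support d).Finite → ∀ s, μ ((d + ·) ⁻¹' s) = μ s :=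
    fun d _ s => measure_preimage_add μ d s
  refine ext_of_generate_finite _ generateFrom_measurableCylinders.symm
    isPiSystem_measurableCylinders (fun s hs => ?_) (by simp)
  obtain ⟨t, S, -, rfl⟩ := (mem_measurableCylinders s).mp hs
  have hν_univ := measure_cylinder_eq_ncard_mul ν hν t univ
  have hμ_univ := measure_cylinder_eq_ncard_mul μ hμ t univ
  rw [cylinder_univ, measure_univ] at hμ_univ
  rw [cylinder_univ] at hν_univ
  rw [Measure.smul_apply, smul_eq_mul, hν_univ, measure_cylinder_eq_ncard_mul ν hν,
    measure_cylinder_eq_ncard_mul μ hμ]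
  calc (S.ncard : ENNReal) * ν (cylinder t {0})
      = S.ncard * ν (cylinder t {0}) *
          ((univ : Set (t → G)).ncard * μ (cylinder t {0})) := by rw [← hμ_univ, mul_one]
    _ = _ := by ring

theorem measure_eq_zero_or_one_of_ae_invariant (μ : Measure (ℕ → G))
    [IsProbabilityMeasure μ] [μ.IsAddLeftInvariant] {A : Set (ℕ → G)}
    (hA : NullMeasurableSet A μ)
    (hinv : ∀ d : ℕ → G, (support d).Finite → (d + ·) ⁻¹' A =ᵐ[μ] A) :
    μ A = 0 ∨ μ A = 1 := by
  have hrestrict : μ.restrict A = μ A • μ := by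
    convert eq_measure_univ_smul_of_finitely_invariant μ (μ.restrict A) ?_ using 2
    · rw [Measure.restrict_apply_univ]
    intro d hd s
    rw [Measure.restrict_apply₀' hA, Measure.restrict_apply₀' hA,
      measure_congr (Filter.EventuallyEq.rfl.inter (hinv d hd).symm), ← Set.preimage_inter,
      measure_preimage_add]
  have hidem : μ A * μ A = μ A := by
    simpa [Measure.restrict_apply₀' hA] using (congrArg (· A) hrestrict).symm
  rcases eq_or_ne (μ A) 0 with h0 | h0
  · exact Or.inl h0
  · exact Or.inr ((ENNReal.mul_eq_left h0 (measure_ne_top μ A)).mp hidem)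

theorem not_nullMeasurableSet_of_invariant_of_preimage_eq_compl (μ : Measure (ℕ → G))
    [IsProbabilityMeasure μ] [μ.IsAddLeftInvariant] {A : Set (ℕ → G)}
    (hinv : ∀ d : ℕ → G, (support d).Finite → (d + ·) ⁻¹' A = A)
    (c : ℕ → G) (hc : (c + ·) ⁻¹' A = Aᶜ) :
    ¬ NullMeasurableSet A μ := by
  intro hA
  have hcompl : μ Aᶜ = μ A := by rw [← hc, measure_preimage_add]
  have hsum := measure_add_measure_compl₀ hA
  rw [hcompl, measure_univ] at hsum
  rcases measure_eq_zero_or_one_of_ae_invariant μ hA (fun d hd => (hinv d hd).eventuallyEq)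
    with h | h <;> rw [h] at hsum <;> norm_num at hsum

end ZeroOneLaw

section Filters

variable {F U : Set (Set ℕ)}

lemma IsUniformFilter.mem_of_diff_finite (hF : IsUniformFilter F) {x y : Set ℕ} (hx : x ∈ F)
    (hxy : (x \ y).Finite) : y ∈ F := by
  refine hF.1.2.2.1 _ (hF.1.2.2.2 x hx _ (hF.2 _ (by rwa [compl_compl]))) y ?_
  rintro n ⟨hnx, hn⟩
  by_contra hny
  exact hn ⟨hnx, hny⟩

lemma IsUltrafilterSet.compl_mem_iff (hU : IsUltrafilterSet U) {x : Set ℕ} :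
    xᶜ ∈ U ↔ x ∉ U := by
  refine ⟨fun hxc hx => hU.1.2.1 ?_, (hU.2 x).resolve_left⟩
  simpa using hU.1.2.2.2 x hx _ hxc

lemma FinToOne.finite_preimage {h : ℕ → ℕ} (hh : FinToOne h) {s : Set ℕ} (hs : s.Finite) :
    (h ⁻¹' s).Finite :=
  hs.preimage' fun n _ => hh n

lemma mem_imgFam_iff {h : ℕ → ℕ} (hF : IsSetFilter F) (hU : IsSetFilter (imgFam h F))
    {y : Set ℕ} : y ∈ imgFam h F ↔ h ⁻¹' y ∈ F := by
  constructor
  · rintro ⟨x, hx, rfl⟩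
    exact hF.2.2.1 x hx _ (subset_preimage_image h x)
  · intro hy
    exact hU.2.2.1 _ ⟨_, hy, rfl⟩ y (image_preimage_subset h y)

lemma isUniformFilter_imgFam {h : ℕ → ℕ} (hF : IsUniformFilter F) (hh : FinToOne h)
    (hU : IsSetFilter (imgFam h F)) : IsUniformFilter (imgFam h F) :=
  ⟨hU, fun x hx => (mem_imgFam_iff hF.1 hU).2
    (hF.2 _ (by simpa only [preimage_compl] using hh.finite_preimage hx))⟩

lemma IsUniformFilter.preimage_add_setOf_support_mem {G : Type*} [AddGroup G]
    (hU : IsUniformFilter U) {d : ℕ → G} (hd : (support d).Finite) :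
    (d + ·) ⁻¹' {ω | support ω ∈ U} = {ω | support ω ∈ U} := by
  ext ω
  have h₁ : support (d + ω) \ support ω ⊆ support d := by
    simpa [sdiff_subset_iff, union_comm] using support_add d ω
  have h₂ : support ω \ support (d + ω) ⊆ support d := by
    simpa [sdiff_subset_iff, union_comm, support_neg] using support_add (-d) (d + ω)
  exact ⟨fun hω => hU.mem_of_diff_finite hω (hd.subset h₁),
    fun hω => hU.mem_of_diff_finite hω (hd.subset h₂)⟩

lemma IsUltrafilterSet.preimage_one_add_setOf_support_mem (hU : IsUltrafilterSet U) :
    ((1 : ℕ → ZMod 2) + ·) ⁻¹' {ω | support ω ∈ U} = {ω | support ω ∈ U}ᶜ := by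
  ext ω
  have hflip : support (1 + ω) = (support ω)ᶜ := by
    ext n
    exact (by decide : ∀ a : ZMod 2, 1 + a ≠ 0 ↔ ¬a ≠ 0) (ω n)
  simp only [mem_preimage, mem_ofPred_eq, mem_compl_iff, hflip, hU.compl_mem_iff]

/-- Sierpiński's theorem, in the coordinates of `(ℤ/2)^ℕ`. -/
theorem not_nullMeasurableSet_setOf_support_mem (hU : IsUniformFilter U)
    (hU' : IsUltrafilterSet U) (μ : Measure (ℕ → ZMod 2)) [IsProbabilityMeasure μ]
    [μ.IsAddLeftInvariant] :
    ¬ NullMeasurableSet {ω | support ω ∈ U} μ :=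
  not_nullMeasurableSet_of_invariant_of_preimage_eq_compl μ
    (fun _ hd => hU.preimage_add_setOf_support_mem hd) 1 hU'.preimage_one_add_setOf_support_mem

end Filters

lemma toCantor_injective : Injective toCantor := fun x y hxy => by
  ext n
  exact decide_eq_decide.mp (congrFun hxy n)

lemma continuous_toCantor_preimage_support {G : Type*} [Zero G] [TopologicalSpace G]
    [DiscreteTopology G] (h : ℕ → ℕ) :
    Continuous fun ω : ℕ → G => toCantor (h ⁻¹' support ω) :=
  continuous_pi fun m => continuous_of_discreteTopology.comp (continuous_apply (h m))
    (g := fun a : G => @decide (a ≠ 0) (Classical.dec _))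

lemma UMSet.nullMeasurableSet_preimage {X Y : Type*} [TopologicalSpace X] [TopologicalSpace Y]
    [MeasurableSpace Y] [OpensMeasurableSpace Y] {A : Set X} (hA : UMSet A) {f : Y → X}
    (hf : Continuous f) (μ : Measure Y) [IsFiniteMeasure μ] :
    NullMeasurableSet (f ⁻¹' A) μ := by
  borelize X
  exact (hA (μ.map f) inferInstance).preimage ⟨hf.measurable, .rfl⟩

/-- The Filter Dichotomy implies that universally measurable uniform filters on ℕ
are meager. -/
theorem stmt_6 (FD : FilterDichotomy) :
    ∀ F : Set (Set ℕ), IsUniformFilter F → UMSet (toCantor '' F) →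
      IsMeagre (toCantor '' F) := by
  intro F hF hUM
  by_contra hF_nonmeagre
  obtain ⟨h, hh, hU⟩ := FD F hF hF_nonmeagre
  have hU_uniform : IsUniformFilter (imgFam h F) := isUniformFilter_imgFam hF hh hU.1
  have hA : {ω : ℕ → ZMod 2 | support ω ∈ imgFam h F} =
      (fun ω => toCantor (h ⁻¹' support ω)) ⁻¹' (toCantor '' F) := by
    ext ω
    simp only [mem_ofPred_eq, mem_preimage, toCantor_injective.mem_set_image,
      mem_imgFam_iff hF.1 hU.1]
  let μ : Measure (ℕ → ZMod 2) := Measure.addHaarMeasure ⊤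
  have : IsProbabilityMeasure μ := ⟨Measure.addHaarMeasure_self⟩
  apply not_nullMeasurableSet_setOf_support_mem hU_uniform hU μ
  rw [hA]
  exact hUM.nullMeasurableSet_preimage (continuous_toCantor_preimage_support h) μ
end

section
/- Suppose f : P(ω) → [0,1] satisfies f(x ∪ y) = f(x) + f(y) for disjoint x, y ⊆ ℕ, f({n}) = 0 for all n ∈ ℕ, and f(ℕ) = 1. Let F = {x ⊆ ℕ : f(x) = 1}, and let h : ℕ → ℕ be a function such that f(h⁻¹({n})) = 0 for all n ∈ ℕ. Then {h[x] : x ∈ F} is not equal to the filter of cofinite subsets of ℕ. -/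
open Set

/-- Auxiliary: a finitely additive nonnegative function on `Set ℕ` vanishing on singletons
vanishes on some infinite set. -/
theorem aux_null_infinite (g : Set ℕ → ℝ) (hg0 : ∀ S : Set ℕ, 0 ≤ g S)
    (hgadd : ∀ S T : Set ℕ, Disjoint S T → g (S ∪ T) = g S + g T)
    (hgsing : ∀ n : ℕ, g {n} = 0) :
    ∃ D : Set ℕ, D.Infinite ∧ g D = 0 := by
  -- basic facts
  have hempty : g ∅ = 0 := by
    have := hgadd ∅ ∅ (disjoint_bot_left)
    simp at this
    linarith
  have hmono : ∀ S T : Set ℕ, S ⊆ T → g S ≤ g T := by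
    intro S T hST
    have hd : Disjoint S (T \ S) := disjoint_sdiff_right
    have heq : g (S ∪ (T \ S)) = g S + g (T \ S) := hgadd _ _ hd
    rw [Set.union_diff_cancel hST] at heq
    have := hg0 (T \ S)
    linarith
  have hfin : ∀ S : Set ℕ, S.Finite → g S = 0 := by
    intro S hS
    obtain ⟨t, rfl⟩ := hS.exists_finset_coe
    clear hS
    classical
    induction t using Finset.induction_on with
    | empty => simpa using hempty
    | @insert a s ha ih =>
      have hd : Disjoint ({a} : Set ℕ) (↑s : Set ℕ) := by simpa using ha
      have heq : g ({a} ∪ ↑s) = g {a} + g ↑s := hgadd _ _ hd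
      rw [Finset.coe_insert, Set.insert_eq, heq, hgsing, ih]
      ring
  have hsub : ∀ S T : Set ℕ, g (S ∪ T) ≤ g S + g T := by
    intro S T
    have hd : Disjoint S (T \ S) := disjoint_sdiff_right
    have h1 : g (S ∪ T) = g S + g (T \ S) := by
      rw [← hgadd _ _ hd, Set.union_diff_self]
    have h2 : g (T \ S) ≤ g T := hmono _ _ diff_subset
    linarith
  -- halving step: any infinite set has an infinite subset of at most half the mass
  have hhalf : ∀ C : Set ℕ, C.Infinite → ∃ D : Set ℕ, D ⊆ C ∧ D.Infinite ∧ g D ≤ g C / 2 := by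
    intro C hC
    set p : ℕ → Prop := fun n => n ∈ C with hp
    have hpinf : (setOf p).Infinite := hC
    set A : Set ℕ := Set.range (fun n => Nat.nth p (2 * n)) with hA
    set B : Set ℕ := Set.range (fun n => Nat.nth p (2 * n + 1)) with hB
    have hAC : A ⊆ C := by
      rintro x ⟨n, rfl⟩; exact Nat.nth_mem_of_infinite hpinf _
    have hBC : B ⊆ C := by
      rintro x ⟨n, rfl⟩; exact Nat.nth_mem_of_infinite hpinf _
    have hAinf : A.Infinite := Set.infinite_range_of_injective (fun a b hab => by
      have := Nat.nth_injective hpinf hab; omega)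
    have hBinf : B.Infinite := Set.infinite_range_of_injective (fun a b hab => by
      have := Nat.nth_injective hpinf hab; omega)
    have hBdisj : B ⊆ C \ A := by
      rintro x ⟨n, rfl⟩
      refine ⟨Nat.nth_mem_of_infinite hpinf _, ?_⟩
      rintro ⟨m, hm⟩
      have := Nat.nth_injective hpinf hm
      omega
    have hsplit : g C = g A + g (C \ A) := by
      rw [← hgadd _ _ (disjoint_sdiff_right), Set.union_diff_cancel hAC]
    by_cases hcase : g A ≤ g C / 2
    · exact ⟨A, hAC, hAinf, hcase⟩
    · refine ⟨B, hBC, hBinf, ?_⟩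
      have h1 : g B ≤ g (C \ A) := hmono _ _ hBdisj
      linarith
  choose half hhsub hhinf hhle using hhalf
  -- build a nested decreasing sequence of infinite sets with mass ≤ (1/2)^k * g univ
  let C : ℕ → {S : Set ℕ // S.Infinite} := fun k =>
    Nat.rec ⟨Set.univ, Set.infinite_univ⟩ (fun _ p => ⟨half p.1 p.2, hhinf p.1 p.2⟩) k
  have hCsucc : ∀ k : ℕ, (C (k + 1)).1 = half (C k).1 (C k).2 := fun k => rfl
  have hCnest : ∀ k : ℕ, (C (k + 1)).1 ⊆ (C k).1 := fun k => by
    rw [hCsucc]; exact hhsub _ _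
  have hCanti : ∀ j k : ℕ, k ≤ j → (C j).1 ⊆ (C k).1 := by
    intro j k hkj
    induction j with
    | zero => simp_all
    | succ n ih =>
      rcases Nat.lt_or_ge k (n + 1) with hlt | hge
      · exact (hCnest n).trans (ih (by omega))
      · have : k = n + 1 := by omega
        subst this; rfl
  have hCle : ∀ k : ℕ, g (C k).1 ≤ (1 / 2) ^ k * g Set.univ := by
    intro k
    induction k with
    | zero =>
      show g Set.univ ≤ (1 / 2 : ℝ) ^ 0 * g Set.univ
      simp
    | succ n ih =>
      rw [hCsucc]
      have := hhle (C n).1 (C n).2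
      rw [pow_succ]
      linarith
  -- pick an unbounded sequence d with d k ∈ C k and k < d k
  have hex : ∀ k : ℕ, ∃ m : ℕ, m ∈ (C k).1 ∧ k < m := fun k => by
    obtain ⟨m, hm, hlt⟩ := (C k).2.exists_gt k
    exact ⟨m, hm, hlt⟩
  choose d hdmem hdlt using hex
  set D : Set ℕ := Set.range d with hD
  have hDinf : D.Infinite := Set.infinite_of_forall_exists_gt (fun a => ⟨d a, ⟨a, rfl⟩, hdlt a⟩)
  -- D is, modulo a finite set, contained in each C k
  have hDle : ∀ k : ℕ, g D ≤ (1 / 2) ^ k * g Set.univ := by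
    intro k
    have hsubset : D ⊆ (C k).1 ∪ d '' {j | j < k} := by
      rintro x ⟨j, rfl⟩
      rcases Nat.lt_or_ge j k with hlt | hge
      · exact Or.inr ⟨j, hlt, rfl⟩
      · exact Or.inl (hCanti j k hge (hdmem j))
    have h1 : g D ≤ g ((C k).1 ∪ d '' {j | j < k}) := hmono _ _ hsubset
    have h2 : g ((C k).1 ∪ d '' {j | j < k}) ≤ g (C k).1 + g (d '' {j | j < k}) := hsub _ _
    have h3 : g (d '' {j | j < k}) = 0 :=
      hfin _ ((Set.finite_Iio k).image d)
    have := hCle k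
    linarith
  refine ⟨D, hDinf, le_antisymm ?_ (hg0 D)⟩
  have htend : Filter.Tendsto (fun k : ℕ => (1 / 2 : ℝ) ^ k * g Set.univ) Filter.atTop
      (nhds (0 * g Set.univ)) := by
    exact (tendsto_pow_atTop_nhds_zero_of_lt_one (by norm_num) (by norm_num)).mul_const _
  rw [zero_mul] at htend
  exact ge_of_tendsto' htend hDle

/-- Suppose `f : 𝒫(ω) → [0,1]` is finitely additive for disjoint sets, sends singletons to
`0` and `ω` to `1`, `F = {x | f x = 1}`, and `h : ℕ → ℕ` satisfies `f(h⁻¹({n})) = 0` for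
all `n`.  Then `{h[x] : x ∈ F}` is not the cofinite filter on ℕ. -/
theorem stmt_11 (f : Set ℕ → ℝ) (hrange : ∀ x : Set ℕ, f x ∈ Set.Icc (0 : ℝ) 1)
    (hadd : ∀ x y : Set ℕ, Disjoint x y → f (x ∪ y) = f x + f y)
    (hsing : ∀ n : ℕ, f {n} = 0) (huniv : f Set.univ = 1)
    (h : ℕ → ℕ) (hfib : ∀ n : ℕ, f (h ⁻¹' {n}) = 0) :
    (fun x : Set ℕ => h '' x) '' {x : Set ℕ | f x = 1} ≠ {y : Set ℕ | yᶜ.Finite} := by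
  -- apply the auxiliary lemma to g S = f (h ⁻¹' S)
  obtain ⟨D, hDinf, hDnull⟩ := aux_null_infinite (fun S => f (h ⁻¹' S))
    (fun S => (hrange _).1)
    (fun S T hST => by
      show f (h ⁻¹' (S ∪ T)) = f (h ⁻¹' S) + f (h ⁻¹' T)
      rw [Set.preimage_union]
      exact hadd _ _ (hST.preimage h))
    hfib
  intro heq
  -- the set h⁻¹(Dᶜ) has f-measure 1
  have hx : f (h ⁻¹' Dᶜ) = 1 := by
    have hd : Disjoint (h ⁻¹' D) (h ⁻¹' Dᶜ) := (disjoint_compl_right).preimage h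
    have hu : h ⁻¹' D ∪ h ⁻¹' Dᶜ = Set.univ := by
      rw [← Set.preimage_union, Set.union_compl_self, Set.preimage_univ]
    have := hadd _ _ hd
    rw [hu, huniv] at this
    have hDnull' : f (h ⁻¹' D) = 0 := hDnull
    linarith
  have hmem : h '' (h ⁻¹' Dᶜ) ∈ (fun x : Set ℕ => h '' x) '' {x : Set ℕ | f x = 1} :=
    ⟨h ⁻¹' Dᶜ, hx, rfl⟩
  rw [heq] at hmem
  -- but the complement of h '' (h⁻¹ Dᶜ) contains D, hence is infinite
  have hDsub : D ⊆ (h '' (h ⁻¹' Dᶜ))ᶜ := by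
    intro a ha
    rintro ⟨b, hb, rfl⟩
    exact hb ha
  exact hDinf (hmem.subset hDsub)
end

section
/- If f : P(ω) → [0,1] is a medial limit, then the filter F = {x ⊆ ℕ : f(x) = 1}, viewed as a subset of the Cantor space P(ω), does not have the property of Baire; in particular, F is nonmeager. -/
/-!
The function `f` is a diffuse charge: nonnegative, finitely additive and zero on points, and
`F = {f = 1}` is an upward closed family any two members of which meet in an infinite set.

If `F` were meagre, Talagrand's construction would give a partition of `ℕ` into finite blocks and a
pattern `z` such that no set agreeing with `z` on infinitely many blocks lies in `F`. Pulling `f`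
back along the blocks then gives a diffuse charge which is positive on every infinite set; this is
impossible, since each set of an uncountable almost disjoint family (the branches of the binary
tree) would carry positive charge, while only countably many can.

If `F` had the property of Baire, being nonmeagre it would be comeagre in some cylinder `[σ ↾ m]`.
That cylinder is invariant under flipping all bits from `m` on, so some `a ∈ F` would have its flip
`b` in `F` as well, although `a ∩ b ⊆ [0, m)` is finite.
-/

open MeasureTheory Set

/-- A medial limit: a universally measurable function `𝒫(ω) → [0,1]` which is finitely
additive for disjoint sets, sends singletons to `0` and `ω` to `1`. -/
def IsMedialLimit (f : Set ℕ → ℝ) : Prop :=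
  (∀ x : Set ℕ, f x ∈ Set.Icc (0 : ℝ) 1) ∧
  (∀ U : Set ℝ, IsOpen U → UMSet (toCantor '' (f ⁻¹' U))) ∧
  (∀ x y : Set ℕ, Disjoint x y → f (x ∪ y) = f x + f y) ∧
  (∀ n : ℕ, f {n} = 0) ∧
  f Set.univ = 1

open Filter Topology

/-- A *charge* is a finitely additive measure; it is diffuse when it vanishes on points. -/
structure IsDiffuseCharge {α : Type*} (μ : Set α → ℝ) : Prop where
  nonneg : ∀ s, 0 ≤ μ s
  map_union : ∀ s t, Disjoint s t → μ (s ∪ t) = μ s + μ t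
  map_singleton : ∀ a, μ {a} = 0

namespace IsDiffuseCharge

variable {α β ι : Type*} {μ : Set α → ℝ} (hμ : IsDiffuseCharge μ)
include hμ

theorem map_empty : μ ∅ = 0 := by
  simpa using hμ.map_union ∅ ∅ (disjoint_empty _)

theorem map_union_add_map_inter (s t : Set α) : μ (s ∪ t) + μ (s ∩ t) = μ s + μ t := by
  have h₁ := hμ.map_union (s \ t) t disjoint_sdiff_left
  have h₂ := hμ.map_union (s ∩ t) (s \ t) (disjoint_sdiff_right.mono_left inter_subset_right)
  rw [sdiff_union_self] at h₁
  rw [inter_union_sdiff] at h₂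
  linarith

theorem map_add_map_compl (s : Set α) : μ s + μ sᶜ = μ univ := by
  rw [← hμ.map_union s sᶜ disjoint_compl_right, union_compl_self]

theorem mono {s t : Set α} (h : s ⊆ t) : μ s ≤ μ t := by
  have := hμ.map_union s (t \ s) disjoint_sdiff_right
  rw [union_sdiff_cancel h] at this
  linarith [hμ.nonneg (t \ s)]

theorem map_finite {s : Set α} (hs : s.Finite) : μ s = 0 := by
  induction s, hs using Set.Finite.induction_on with
  | empty => exact hμ.map_empty
  | @insert a s ha _ ih =>
    rw [← singleton_union, hμ.map_union _ _ (disjoint_singleton_left.2 ha), hμ.map_singleton, ih,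
      add_zero]

theorem map_union_of_finite_inter {s t : Set α} (h : (s ∩ t).Finite) :
    μ (s ∪ t) = μ s + μ t := by
  linarith [hμ.map_union_add_map_inter s t, hμ.map_finite h]

theorem map_biUnion_finset {A : ι → Set α} {I : Finset ι}
    (hA : (I : Set ι).Pairwise fun i j => (A i ∩ A j).Finite) :
    μ (⋃ i ∈ I, A i) = ∑ i ∈ I, μ (A i) := by
  classical
  induction I using Finset.induction_on with
  | empty => simpa using hμ.map_empty
  | @insert i I hi ih =>
    have hAI : (I : Set ι).Pairwise fun i j => (A i ∩ A j).Finite :=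
      hA.mono (by simp [Finset.coe_insert])
    rw [Finset.set_biUnion_insert, Finset.sum_insert hi, hμ.map_union_of_finite_inter, ih hAI]
    rw [inter_iUnion₂]
    exact I.finite_toSet.biUnion fun j hj =>
      hA (by simp) (by simp [Finset.mem_coe.mp hj]) (ne_of_mem_of_not_mem hj hi).symm

theorem finite_setOf_lt_map {A : ι → Set α} (hA : Pairwise fun i j => (A i ∩ A j).Finite)
    {ε : ℝ} (hε : 0 < ε) : {i | ε < μ (A i)}.Finite := by
  by_contra hinf
  obtain ⟨n, hn⟩ := exists_nat_gt (μ univ / ε)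
  obtain ⟨I, hIA, rfl⟩ := Set.Infinite.exists_subset_card_eq hinf n
  have : I.card * ε ≤ μ univ := calc
    I.card * ε = ∑ i ∈ I, ε := by simp
    _ ≤ ∑ i ∈ I, μ (A i) := Finset.sum_le_sum fun i hi => (hIA hi).le
    _ = μ (⋃ i ∈ I, A i) := (hμ.map_biUnion_finset fun i _ j _ hij => hA hij).symm
    _ ≤ μ univ := hμ.mono (subset_univ _)
  rw [div_lt_iff₀ hε] at hn
  linarith

theorem countable_setOf_pos_map {A : ι → Set α} (hA : Pairwise fun i j => (A i ∩ A j).Finite) :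
    {i | 0 < μ (A i)}.Countable := by
  refine (countable_iUnion fun n : ℕ =>
    (hμ.finite_setOf_lt_map hA (ε := 1 / (n + 1)) Nat.one_div_pos_of_nat).countable).mono ?_
  intro i (hi : 0 < μ (A i))
  obtain ⟨n, hn⟩ := exists_nat_one_div_lt hi
  exact mem_iUnion.2 ⟨n, hn⟩

theorem comp_preimage {g : α → β} (hg : ∀ b, (g ⁻¹' {b}).Finite) :
    IsDiffuseCharge fun s => μ (g ⁻¹' s) where
  nonneg _ := hμ.nonneg _
  map_union s t hst := by rw [preimage_union, hμ.map_union _ _ (hst.preimage g)]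
  map_singleton b := hμ.map_finite (hg b)

end IsDiffuseCharge

/-- A code of the initial segment `x ↾ n`; distinct branches `x` of the binary tree share only
finitely many initial segments, giving an uncountable almost disjoint family in `ℕ`. -/
def initialSegmentCode (x : ℕ → Bool) (n : ℕ) : ℕ :=
  Encodable.encode (n, (Finset.range n).filter fun i => x i)

def initialSegmentCodes (x : ℕ → Bool) : Set ℕ :=
  range (initialSegmentCode x)

theorem initialSegmentCodes_infinite (x : ℕ → Bool) : (initialSegmentCodes x).Infinite :=
  infinite_range_of_injective fun n n' h => by
    simpa using congrArg Prod.fst (Encodable.encode_injective h)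

theorem finite_initialSegmentCodes_inter {x y : ℕ → Bool} (hxy : x ≠ y) :
    (initialSegmentCodes x ∩ initialSegmentCodes y).Finite := by
  obtain ⟨k, hk⟩ := Function.ne_iff.mp hxy
  refine ((finite_Iic k).image (initialSegmentCode x)).subset ?_
  rintro _ ⟨⟨n, rfl⟩, ⟨n', h⟩⟩
  obtain ⟨rfl, hF⟩ := Prod.ext_iff.mp (Encodable.encode_injective h)
  refine ⟨n', mem_Iic.mpr <| not_lt.mp fun hkn => hk (Bool.eq_iff_iff.mpr ?_), rfl⟩
  simpa [hkn] using (Finset.ext_iff.mp hF k).symm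

theorem IsDiffuseCharge.exists_infinite_map_eq_zero {μ : Set ℕ → ℝ} (hμ : IsDiffuseCharge μ) :
    ∃ s : Set ℕ, s.Infinite ∧ μ s = 0 := by
  have : Uncountable (ℕ → Bool) := by
    rw [← Cardinal.aleph0_lt_mk_iff]
    simpa using Cardinal.aleph0_lt_continuum
  obtain ⟨x, hx⟩ : ∃ x, ¬ 0 < μ (initialSegmentCodes x) := by
    by_contra! h
    exact not_countable_univ ((hμ.countable_setOf_pos_map
      fun _ _ => finite_initialSegmentCodes_inter).mono fun x _ => h x)
  exact ⟨_, initialSegmentCodes_infinite x, (not_lt.mp hx).antisymm (hμ.nonneg _)⟩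

def xorHomeomorph {ι : Type*} (c : ι → Bool) : (ι → Bool) ≃ₜ (ι → Bool) where
  toFun w i := xor (c i) (w i)
  invFun w i := xor (c i) (w i)
  left_inv w := by simp
  right_inv w := by simp
  continuous_toFun :=
    continuous_pi fun i =>
      (continuous_of_discreteTopology (f := xor (c i))).comp (continuous_apply i)
  continuous_invFun :=
    continuous_pi fun i =>
      (continuous_of_discreteTopology (f := xor (c i))).comp (continuous_apply i)

@[simp]
theorem xorHomeomorph_apply {ι : Type*} (c w : ι → Bool) (i : ι) :
    xorHomeomorph c w i = xor (c i) (w i) :=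
  rfl

@[simp]
theorem xorHomeomorph_xorHomeomorph {ι : Type*} (c w : ι → Bool) :
    xorHomeomorph c (xorHomeomorph c w) = w :=
  (xorHomeomorph c).left_inv w

theorem exists_antitone_isOpen_dense_of_mem_residual {X : Type*} [TopologicalSpace X] {s : Set X}
    (hs : s ∈ residual X) :
    ∃ D : ℕ → Set X, Antitone D ∧ (∀ k, IsOpen (D k)) ∧ (∀ k, Dense (D k)) ∧ ⋂ k, D k ⊆ s := by
  obtain ⟨T, hTo, hTd, hTc, hTs⟩ := mem_residual_iff.mp hs
  obtain ⟨g, hg⟩ := (hTc.insert univ).exists_eq_range (insert_nonempty _ _)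
  have hgT (j : ℕ) : g j ∈ insert univ T := hg ▸ mem_range_self j
  have hgo (j : ℕ) : IsOpen (g j) := (hgT j).elim (fun h => h ▸ isOpen_univ) (hTo _)
  have hgd (j : ℕ) : Dense (g j) := (hgT j).elim (fun h => h ▸ dense_univ) (hTd _)
  refine ⟨dissipate g, antitone_dissipate, fun k => (finite_Iic k).isOpen_biInter fun j _ => hgo j,
    fun k => ?_, ?_⟩
  · have : dissipate g k = ⋂₀ (g '' Iic k) := by ext; simp [mem_dissipate]
    rw [this]
    exact ((finite_Iic k).image g).dense_sInter (forall_mem_image.2 fun j _ => hgo j)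
      (forall_mem_image.2 fun j _ => hgd j)
  · rw [iInter_dissipate, ← sInter_range, ← hg, sInter_insert, univ_inter]
    exact hTs

theorem exists_window_forall_mem {D : Set (ℕ → Bool)} (hDo : IsOpen D) (hDd : Dense D) (n : ℕ) :
    ∃ m, n < m ∧ ∃ τ : ℕ → Bool, ∀ w : ℕ → Bool, (∀ i, n ≤ i → i < m → w i = τ i) → w ∈ D := by
  let pad (c : Fin n → Bool) (i : ℕ) : Bool := if h : i < n then c ⟨i, h⟩ else false
  -- `D'` consists of the points which stay in `D` whatever their first `n` bits are changed to
  let D' := ⋂ c : Fin n → Bool, xorHomeomorph (pad c) ⁻¹' D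
  have hD'o : IsOpen D' :=
    isOpen_iInter_of_finite fun c => hDo.preimage (xorHomeomorph _).continuous
  have hD'd : Dense D' :=
    dense_iInter_of_isOpen (fun c => hDo.preimage (xorHomeomorph _).continuous)
      fun c => hDd.preimage (xorHomeomorph _).isOpenMap
  obtain ⟨τ, hτ⟩ := hD'd.nonempty
  obtain ⟨_, ⟨σ, m, rfl⟩, hτσ, hσD'⟩ :=
    (PiNat.isTopologicalBasis_cylinders _).exists_subset_of_mem_open hτ hD'o
  rw [PiNat.mem_cylinder_iff_eq] at hτσ
  refine ⟨max m (n + 1), by omega, τ, fun w hw => ?_⟩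
  let c : Fin n → Bool := fun i => xor (τ i) (w i)
  have hcw : xorHomeomorph (pad c) w ∈ D' := by
    refine hσD' (hτσ ▸ fun i hi => ?_)
    by_cases hin : i < n
    · simp [pad, c, hin]
    · simpa [pad, hin] using hw i (by omega) (by omega)
  simpa using mem_iInter.mp hcw c

theorem exists_blocks_forall_mem {D : ℕ → Set (ℕ → Bool)} (hD : Antitone D)
    (hDo : ∀ k, IsOpen (D k)) (hDd : ∀ k, Dense (D k)) :
    ∃ blk : ℕ → ℕ, (∀ k, (blk ⁻¹' {k}).Finite) ∧ ∃ z : ℕ → Bool,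
      ∀ w, (∃ᶠ k in atTop, ∀ i, blk i = k → w i = z i) → w ∈ ⋂ k, D k := by
  choose next hnext τ hτ using fun k n => exists_window_forall_mem (hDo k) (hDd k) n
  -- the blocks are the intervals `[a k, a (k + 1))`
  let a (k : ℕ) : ℕ := Nat.rec 0 (fun k ak => next k ak) k
  have ha : StrictMono a := strictMono_nat_of_lt_succ fun k => hnext k (a k)
  have hex (i : ℕ) : ∃ k, i < a (k + 1) := ⟨i, ha.le_apply.trans_lt (ha (lt_add_one i))⟩
  let blk (i : ℕ) : ℕ := Nat.find (hex i)
  have hblk {i k : ℕ} (h₁ : a k ≤ i) (h₂ : i < a (k + 1)) : blk i = k :=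
    (Nat.find_eq_iff _).2 ⟨h₂, fun j hj => not_lt.2 (h₁.trans' (ha.monotone hj))⟩
  refine ⟨blk, fun k => (finite_Iio (a (k + 1))).subset fun i hi => ?_,
    fun i => τ (blk i) (a (blk i)) i, fun w hw => mem_iInter.2 fun j => ?_⟩
  · exact (mem_singleton_iff.mp hi) ▸ Nat.find_spec (hex i)
  obtain ⟨k, hjk, hk⟩ := (hw.and_eventually (eventually_ge_atTop j)).exists.imp fun _ h => h.symm
  refine hD hjk (hτ k (a k) w fun i h₁ h₂ => ?_)
  simp only [hk i (hblk h₁ h₂), hblk h₁ h₂]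

theorem IsMeagre.exists_blocks {S : Set (ℕ → Bool)} (hS : IsMeagre S) :
    ∃ blk : ℕ → ℕ, (∀ k, (blk ⁻¹' {k}).Finite) ∧ ∃ z : ℕ → Bool,
      ∀ w, (∃ᶠ k in atTop, ∀ i, blk i = k → w i = z i) → w ∉ S := by
  obtain ⟨D, hD, hDo, hDd, hDS⟩ := exists_antitone_isOpen_dense_of_mem_residual hS
  obtain ⟨blk, hblk, z, hz⟩ := exists_blocks_forall_mem hD hDo hDd
  exact ⟨blk, hblk, z, fun w hw => hDS (hz w hw)⟩

theorem exists_mem_xorHomeomorph_mem_of_hasBaireProperty {F : Set (ℕ → Bool)}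
    (hF : HasBaireProperty F) (hF' : ¬ IsMeagre F) :
    ∃ m, ∃ w ∈ F, xorHomeomorph (fun i => decide (m ≤ i)) w ∈ F := by
  obtain ⟨U, hUo, hFU⟩ := hF
  obtain ⟨u, hu⟩ : U.Nonempty :=
    nonempty_iff_ne_empty.2 fun hU => hF' (by rwa [hU, ← bot_eq_empty, symmDiff_bot] at hFU)
  obtain ⟨_, ⟨σ, m, rfl⟩, huσ, hσU⟩ :=
    (PiNat.isTopologicalBasis_cylinders _).exists_subset_of_mem_open hu hUo
  let φ := xorHomeomorph fun i => decide (m ≤ i)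
  have hφ : ∀ w ∈ PiNat.cylinder σ m, φ w ∈ PiNat.cylinder σ m := fun w hw i hi => by
    simpa [φ, Nat.not_le.2 hi] using hw i hi
  have hCF : IsMeagre (PiNat.cylinder σ m \ F) :=
    hFU.mono fun w hw => Or.inr ⟨hσU hw.1, hw.2⟩
  by_contra! h
  refine not_isMeagre_of_isOpen (PiNat.isOpen_cylinder _ σ m) ⟨u, huσ⟩
    ((hCF.union (hCF.preimage_of_isOpenMap φ.continuous φ.isOpenMap)).mono fun w hw => ?_)
  by_cases hwF : w ∈ F
  · exact Or.inr ⟨hφ w hw, h m w hwF⟩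
  · exact Or.inl ⟨hw, hwF⟩

namespace IsDiffuseCharge

variable {μ : Set ℕ → ℝ} (hμ : IsDiffuseCharge μ) (h₁ : μ univ = 1)
include hμ h₁

theorem infinite_inter_of_map_eq_one {s t : Set ℕ} (hs : μ s = 1) (ht : μ t = 1) :
    (s ∩ t).Infinite := fun hst => by
  linarith [hμ.map_union_add_map_inter s t, hμ.map_finite hst, hμ.mono (subset_univ (s ∪ t))]

theorem not_isMeagre_setOf_map_eq_one : ¬ IsMeagre (toCantor '' {x | μ x = 1}) := by
  intro hF
  obtain ⟨blk, hblk, z, hz⟩ := hF.exists_blocks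
  obtain ⟨s, hs, hs0⟩ := (hμ.comp_preimage hblk).exists_infinite_map_eq_zero
  -- on the blocks indexed by `s`, the set `x` is exactly the pattern `z`
  let x := blk ⁻¹' sᶜ ∪ {i | z i}
  have hx : μ x = 1 := by
    refine le_antisymm (h₁ ▸ hμ.mono (subset_univ x)) ?_
    have := (hμ.comp_preimage hblk).map_add_map_compl s
    simp only [hs0, preimage_univ, h₁, zero_add] at this
    exact this ▸ hμ.mono subset_union_left
  refine hz (toCantor x) ((Nat.frequently_atTop_iff_infinite.2 hs).mono fun k hk i hik => ?_)
    ⟨x, hx, rfl⟩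
  simp [toCantor, x, hik, show k ∈ s from hk]

theorem not_hasBaireProperty_setOf_map_eq_one :
    ¬ HasBaireProperty (toCantor '' {x | μ x = 1}) := by
  intro hF
  obtain ⟨m, _, ⟨a, ha, rfl⟩, b, hb, hab⟩ :=
    exists_mem_xorHomeomorph_mem_of_hasBaireProperty hF (hμ.not_isMeagre_setOf_map_eq_one h₁)
  refine hμ.infinite_inter_of_map_eq_one h₁ ha hb ((finite_Iio m).subset fun i hi => ?_)
  have := congrFun hab i
  simp_all [toCantor]

end IsDiffuseCharge

/-- If `f` is a medial limit then the filter `F = {x | f x = 1}` does not have the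
property of Baire; in particular it is nonmeager. -/
theorem stmt_14 (f : Set ℕ → ℝ) (hf : IsMedialLimit f) :
    ¬ HasBaireProperty (toCantor '' {x : Set ℕ | f x = 1}) ∧
      ¬ IsMeagre (toCantor '' {x : Set ℕ | f x = 1}) := by
  obtain ⟨hrange, -, hadd, hsing, huniv⟩ := hf
  have hμ : IsDiffuseCharge f := ⟨fun x => (hrange x).1, hadd, hsing⟩
  exact ⟨hμ.not_hasBaireProperty_setOf_map_eq_one huniv, hμ.not_isMeagre_setOf_map_eq_one huniv⟩
end

section
/- If F is a semifilter on ℕ which is a universally measurable subset of the Cantor space P(ω), and h : ℕ → ℕ is finite-to-one, then {h[x] : x ∈ F} is a universally measurable subset of P(ω). -/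
open MeasureTheory Set

/-- A semifilter on ℕ: a nonempty proper collection of subsets of ℕ closed under supersets
and under finite changes. -/
def IsSemifilter (F : Set (Set ℕ)) : Prop :=
  F.Nonempty ∧ F ≠ Set.univ ∧ (∀ x ∈ F, ∀ y : Set ℕ, x ⊆ y → y ∈ F) ∧
    (∀ x ∈ F, ∀ y : Set ℕ, (symmDiff x y).Finite → y ∈ F)

/-!
For an upward closed `F`, a set `y` is of the form `h[x]` with `x ∈ F` iff `y ⊆ ran h` and
`h⁻¹[y] ∈ F`. In the Cantor space this exhibits `{h[x] : x ∈ F}` as the intersection of the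
closed set `{f | f = 0 off ran h}` with the preimage of `F` under the continuous map
`f ↦ f ∘ h`, and universal measurability survives both operations.
-/

section UMSet

variable {X Y : Type*} [TopologicalSpace X] [TopologicalSpace Y]

theorem umSet_iff [MeasurableSpace X] [BorelSpace X] {A : Set X} :
    UMSet A ↔ ∀ μ : Measure X, SigmaFinite μ → NullMeasurableSet A μ := by
  obtain rfl := BorelSpace.measurable_eq (α := X)
  rfl

theorem IsClosed.umSet {A : Set X} (hA : IsClosed A) : UMSet A := by
  borelize X
  exact umSet_iff.2 fun _ _ => hA.measurableSet.nullMeasurableSet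

theorem UMSet.inter {A B : Set X} (hA : UMSet A) (hB : UMSet B) : UMSet (A ∩ B) :=
  fun μ hμ => (hA μ hμ).inter (hB μ hμ)

/-- Pushing forward a σ-finite measure need not give a σ-finite one, so we first pass to an
equivalent finite measure. -/
theorem UMSet.preimage {A : Set Y} (hA : UMSet A) {f : X → Y} (hf : Continuous f) :
    UMSet (f ⁻¹' A) := by
  borelize X Y
  rw [umSet_iff] at hA ⊢
  intro μ _
  obtain ⟨ν, _, hμν, -⟩ := exists_isFiniteMeasure_absolutelyContinuous μ
  have hAν : NullMeasurableSet A (ν.map f) := hA _ inferInstance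
  exact (hAν.preimage ⟨hf.measurable, .rfl⟩).mono_ac hμν

end UMSet

theorem image_image_eq_of_isUpperSet {α β : Type*} {F : Set (Set α)} (hF : IsUpperSet F)
    (h : α → β) : (fun x => h '' x) '' F = {y | y ⊆ range h ∧ h ⁻¹' y ∈ F} := by
  ext y
  constructor
  · rintro ⟨x, hx, rfl⟩
    exact ⟨image_subset_range h x, hF (subset_preimage_image h x) hx⟩
  · rintro ⟨hy, hpre⟩
    exact ⟨h ⁻¹' y, hpre, image_preimage_eq_of_subset hy⟩

def ofCantor (f : ℕ → Bool) : Set ℕ := {n | f n = true}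

theorem toCantor_image_eq_preimage (S : Set (Set ℕ)) : toCantor '' S = ofCantor ⁻¹' S := by
  have hleft : ∀ x, ofCantor (toCantor x) = x := fun x => by ext; simp [ofCantor, toCantor]
  have hright : ∀ f, toCantor (ofCantor f) = f := fun f => by
    funext n; cases hf : f n <;> simp [ofCantor, toCantor, hf]
  exact congrFun (image_eq_preimage_of_inverse hleft hright) S

theorem toCantor_image_imgFam {F : Set (Set ℕ)} (hF : IsUpperSet F) (h : ℕ → ℕ) :
    toCantor '' imgFam h F =
      (· ∘ h) ⁻¹' (toCantor '' F) ∩ {f | ∀ n ∉ range h, f n = false} := by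
  rw [toCantor_image_eq_preimage, toCantor_image_eq_preimage, imgFam,
    image_image_eq_of_isUpperSet hF]
  ext f
  simp only [mem_preimage, mem_ofPred_eq, mem_inter_iff, ofCantor, subset_def]
  constructor
  · rintro ⟨hran, hpre⟩
    exact ⟨hpre, fun n hn => Bool.eq_false_iff.2 fun hfn => hn (hran n hfn)⟩
  · rintro ⟨hpre, hran⟩
    exact ⟨fun n hfn => by_contra fun hn => by simp [hran n hn] at hfn, hpre⟩

theorem isClosed_setOf_apply_eq_off {ι β : Type*} [TopologicalSpace β] [T1Space β]
    (s : Set ι) (b : β) : IsClosed {f : ι → β | ∀ i ∉ s, f i = b} := by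
  simp only [ofPred_forall]
  exact isClosed_iInter fun i => isClosed_iInter fun _ =>
    isClosed_singleton.preimage (continuous_apply i)

theorem stmt_15_general (F : Set (Set ℕ)) (hF : IsSemifilter F)
    (hUM : UMSet (toCantor '' F)) (h : ℕ → ℕ) :
    UMSet (toCantor '' imgFam h F) := by
  have hupper : IsUpperSet F := fun x y hxy hx => hF.2.2.1 x hx y hxy
  rw [toCantor_image_imgFam hupper]
  exact (hUM.preimage (by fun_prop)).inter (isClosed_setOf_apply_eq_off _ _).umSet

/-- If `F` is a universally measurable semifilter and `h` is finite-to-one, then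
`{h[x] : x ∈ F}` is universally measurable. -/
theorem stmt_15 (F : Set (Set ℕ)) (hF : IsSemifilter F)
    (hUM : UMSet (toCantor '' F)) (h : ℕ → ℕ) (hfto : FinToOne h) :
    UMSet (toCantor '' imgFam h F) :=
  stmt_15_general F hF hUM h
end

section
/- Let F be a semifilter on ℕ. Then F is comeager as a subset of the Cantor space P(ω) if and only if there exists a finite-to-one function h : ℕ → ℕ such that {h[x] : x ∈ F} is exactly the set of all infinite subsets of ℕ. -/
open MeasureTheory Set

/-!
If `F` is comeager, Baire category gives a point `z` and an interval partition
`0 = n 0 < n 1 < ⋯` such that every point agreeing with `z` on infinitely many intervals lies in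
`F`; since `F` is upward closed, every set containing infinitely many of the intervals lies in `F`,
and `h i` = "the index of the interval containing `i`" works.

Conversely, a finite-to-one `h` admits an interval partition such that `h` is larger on
`[n (k + 1), ∞)` than on `[0, n k)`. Comeager many `x` contain infinitely many triple intervals
`[n k, n (k + 3))`; the union `B` of their middle intervals has infinite image, so `h[B] = h[a]`
for some `a ∈ F`, and the separation of the values of `h` forces `a ⊆ x`.
-/

@[simp]
theorem toCantor_apply_eq_true {x : Set ℕ} {i : ℕ} : toCantor x i = true ↔ i ∈ x := by
  simp [toCantor]

theorem toCantor_setOf (f : ℕ → Bool) : toCantor {i | f i = true} = f := by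
  funext i
  cases hi : f i <;> simp [toCantor, hi]

theorem IsSemifilter.infinite_of_mem {F : Set (Set ℕ)} (hF : IsSemifilter F) {x : Set ℕ}
    (hx : x ∈ F) : x.Infinite := by
  obtain ⟨-, hproper, hup, hfin⟩ := hF
  intro hxfin
  have hempty : ∅ ∈ F := hfin x hx ∅ (by simpa [symmDiff_def] using hxfin)
  exact hproper (eq_univ_of_forall fun y => hup ∅ hempty y (empty_subset y))

theorem FinToOne.infinite_image {h : ℕ → ℕ} (hh : FinToOne h) {x : Set ℕ} (hx : x.Infinite) :
    (h '' x).Infinite := fun hfin =>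
  hx <| (hfin.preimage' fun v _ => hh v).subset (subset_preimage_image h x)

theorem FinToOne.exists_lt_apply {h : ℕ → ℕ} (hh : FinToOne h) (N : ℕ) :
    ∃ N', N < N' ∧ ∀ i j, N' ≤ i → j < N → h j < h i := by
  set M := (Finset.range N).sup h
  obtain ⟨B, hB⟩ := ((finite_Iic M).preimage' fun v _ => hh v).bddAbove
  refine ⟨max (N + 1) (B + 1), by omega, fun i j hi hj => ?_⟩
  have hMi : M < h i := not_le.1 fun hle => by have := hB hle; omega
  exact (Finset.le_sup (Finset.mem_range.2 hj)).trans_lt hMi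

theorem exists_strictMono_forall_succ {P : ℕ → ℕ → ℕ → Prop}
    (hP : ∀ k N, ∃ N', N < N' ∧ P k N N') :
    ∃ n : ℕ → ℕ, StrictMono n ∧ n 0 = 0 ∧ ∀ k, P k (n k) (n (k + 1)) := by
  choose next hlt hnext using hP
  let n : ℕ → ℕ := fun k => Nat.rec 0 next k
  exact ⟨n, strictMono_nat_of_lt_succ fun k => hlt k (n k), rfl, fun k => hnext k (n k)⟩

theorem exists_cylinder_subset {U : Set (ℕ → Bool)} (hU : IsOpen U) {g : ℕ → Bool} (hg : g ∈ U) :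
    ∃ N, PiNat.cylinder g N ⊆ U := by
  obtain ⟨-, ⟨y, N, rfl⟩, hgy, hsub⟩ :=
    (PiNat.isTopologicalBasis_cylinders _).exists_subset_of_mem_open hg hU
  exact ⟨N, PiNat.mem_cylinder_iff_eq.1 hgy ▸ hsub⟩

def flipOn (s : Finset ℕ) : (ℕ → Bool) ≃ₜ (ℕ → Bool) where
  toFun f i := xor (decide (i ∈ s)) (f i)
  invFun f i := xor (decide (i ∈ s)) (f i)
  left_inv f := by funext i; simp
  right_inv f := by funext i; simp
  continuous_toFun := continuous_pi fun i =>
    (continuous_of_discreteTopology (f := xor (decide (i ∈ s)))).comp (continuous_apply i)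
  continuous_invFun := continuous_pi fun i =>
    (continuous_of_discreteTopology (f := xor (decide (i ∈ s)))).comp (continuous_apply i)

theorem flipOn_apply (s : Finset ℕ) (f : ℕ → Bool) (i : ℕ) :
    flipOn s f i = xor (decide (i ∈ s)) (f i) := rfl

@[simp]
theorem flipOn_flipOn (s : Finset ℕ) (f : ℕ → Bool) : flipOn s (flipOn s f) = f :=
  (flipOn s).left_inv f

theorem isOpen_setOf_forall_Ico_eq_true (a b : ℕ) :
    IsOpen {f : ℕ → Bool | ∀ i ∈ Ico a b, f i = true} := by
  simp only [ofPred_forall]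
  exact (finite_Ico a b).isOpen_biInter fun i _ =>
    (isOpen_discrete {true}).preimage (continuous_apply (A := fun _ : ℕ => Bool) i)

theorem setOf_infinite_blocks_eq_true_mem_residual (a b : ℕ → ℕ) (ha : ∀ k, k ≤ a k) :
    {f : ℕ → Bool | {k | ∀ i ∈ Ico (a k) (b k), f i = true}.Infinite} ∈ residual (ℕ → Bool) := by
  have hiInter : {f : ℕ → Bool | {k | ∀ i ∈ Ico (a k) (b k), f i = true}.Infinite} =
      ⋂ m, ⋃ k > m, {f | ∀ i ∈ Ico (a k) (b k), f i = true} := by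
    ext f
    simp [Set.infinite_iff_exists_gt, and_comm]
  rw [hiInter, countable_iInter_mem]
  refine fun m => residual_of_dense_open
    (isOpen_biUnion fun k _ => isOpen_setOf_forall_Ico_eq_true _ _) ?_
  rw [dense_iff_inter_open]
  rintro V hV ⟨g, hg⟩
  obtain ⟨N, hN⟩ := exists_cylinder_subset hV hg
  have hk := ha (N + m + 1)
  refine ⟨fun i => g i || decide (a (N + m + 1) ≤ i), hN fun i hi => ?_,
    mem_iUnion₂.2 ⟨N + m + 1, by omega, fun i hi => by simp [hi.1]⟩⟩
  simp [show ¬a (N + m + 1) ≤ i by omega]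

theorem exists_pattern_blocks_of_mem_residual {R : Set (ℕ → Bool)}
    (hR : R ∈ residual (ℕ → Bool)) :
    ∃ z : ℕ → Bool, ∃ n : ℕ → ℕ, StrictMono n ∧ n 0 = 0 ∧
      ∀ f : ℕ → Bool, {k | ∀ i ∈ Ico (n k) (n (k + 1)), f i = z i}.Infinite → f ∈ R := by
  obtain ⟨T, hTR, hTδ, hTd⟩ := mem_residual.1 hR
  obtain ⟨U, hUo, rfl⟩ := hTδ.eq_iInter_nat
  have hUd : ∀ m, Dense (U m) := fun m => hTd.mono (iInter_subset U m)
  have hflipOpen (p : ℕ × Finset ℕ) : IsOpen (flipOn p.2 ⁻¹' U p.1) :=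
    (hUo p.1).preimage (flipOn p.2).continuous
  have hflipDense (p : ℕ × Finset ℕ) : Dense (flipOn p.2 ⁻¹' U p.1) :=
    (hUd p.1).preimage (flipOn p.2).isOpenMap
  -- `z` stays in every `U m` after flipping any finite set of coordinates, so the prefix of `f`
  -- below the next block does not matter
  obtain ⟨z, hz⟩ := (dense_iInter_of_isOpen hflipOpen hflipDense).nonempty
  have hblock : ∀ k N, ∃ N', N < N' ∧ ∀ f : ℕ → Bool,
      (∀ i ∈ Ico N N', f i = z i) → ∀ m ≤ k, f ∈ U m := by
    intro k N
    set P := (Finset.range (k + 1)) ×ˢ (Finset.range N).powerset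
    have hO : IsOpen (⋂ p ∈ P, flipOn p.2 ⁻¹' U p.1) :=
      isOpen_biInter_finset fun p _ => hflipOpen p
    obtain ⟨N₀, hN₀⟩ := exists_cylinder_subset hO (mem_iInter₂.2 fun p _ => mem_iInter.1 hz p)
    refine ⟨max (N + 1) N₀, by omega, fun f hf m hm => ?_⟩
    set s := (Finset.range N).filter fun i => f i ≠ z i
    have hs : flipOn s f ∈ PiNat.cylinder z N₀ := by
      intro i hi
      rw [flipOn_apply]
      by_cases hfz : f i = z i
      · simp [s, hfz]
      · have hiN : i < N := by
          by_contra
          exact hfz (hf i ⟨by omega, by omega⟩)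
        rw [decide_eq_true (by simp [s, hiN, hfz] : i ∈ s)]
        revert hfz
        cases f i <;> cases z i <;> simp
    simpa using mem_iInter₂.1 (hN₀ hs) (m, s) (by simp [P, s]; omega)
  obtain ⟨n, hn, h0, hnext⟩ := exists_strictMono_forall_succ hblock
  refine ⟨z, n, hn, h0, fun f hf => hTR (mem_iInter.2 fun m => ?_)⟩
  obtain ⟨k, hk, hmk⟩ := hf.exists_gt m
  exact hnext k f hk m hmk.le

theorem exists_blocks_of_toCantor_image_mem_residual {F : Set (Set ℕ)}
    (hup : ∀ x ∈ F, ∀ y : Set ℕ, x ⊆ y → y ∈ F) (hF : toCantor '' F ∈ residual (ℕ → Bool)) :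
    ∃ n : ℕ → ℕ, StrictMono n ∧ n 0 = 0 ∧
      ∀ x : Set ℕ, {k | Ico (n k) (n (k + 1)) ⊆ x}.Infinite → x ∈ F := by
  obtain ⟨z, n, hn, h0, hz⟩ := exists_pattern_blocks_of_mem_residual hF
  refine ⟨n, hn, h0, fun x hx => ?_⟩
  -- `z ∩ x` agrees with `z` on every block contained in `x`
  obtain ⟨a, ha, hza⟩ := hz (fun i => z i && toCantor x i) (hx.mono fun k hk i hi => by simp [hk hi])
  refine hup a ha x fun i hi => ?_
  have hi' := congrFun hza i
  simp only [toCantor_apply_eq_true.2 hi] at hi'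
  exact toCantor_apply_eq_true.1 (Bool.and_eq_true_iff.1 hi'.symm).2

def blockIndex (n : ℕ → ℕ) (i : ℕ) : ℕ := Nat.findGreatest (fun k => n k ≤ i) i

section blockIndex

variable {n : ℕ → ℕ} (hn : StrictMono n) (h0 : n 0 = 0)
include hn h0

theorem blockIndex_eq_iff {i k : ℕ} : blockIndex n i = k ↔ i ∈ Ico (n k) (n (k + 1)) := by
  have hle : n (blockIndex n i) ≤ i :=
    Nat.findGreatest_spec (P := fun k => n k ≤ i) (Nat.zero_le i) (show n 0 ≤ i by omega)
  have hlt : i < n (blockIndex n i + 1) := by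
    by_contra! hge
    have := Nat.le_findGreatest (P := fun k => n k ≤ i) ((hn.le_apply).trans hge) hge
    simp only [blockIndex] at this
    omega
  constructor
  · rintro rfl
    exact ⟨hle, hlt⟩
  · rintro ⟨hki, hik⟩
    have h1 : blockIndex n i < k + 1 := hn.lt_iff_lt.1 (hle.trans_lt hik)
    have h2 : k < blockIndex n i + 1 := hn.lt_iff_lt.1 (hki.trans_lt hlt)
    omega

theorem finToOne_blockIndex : FinToOne (blockIndex n) := fun k =>
  (finite_Ico (n k) (n (k + 1))).subset fun _ hi => (blockIndex_eq_iff hn h0).1 hi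

theorem imgFam_blockIndex {F : Set (Set ℕ)} (hinf : ∀ x ∈ F, x.Infinite)
    (hblocks : ∀ x : Set ℕ, {k | Ico (n k) (n (k + 1)) ⊆ x}.Infinite → x ∈ F) :
    imgFam (blockIndex n) F = {y | y.Infinite} := by
  ext y
  constructor
  · rintro ⟨x, hx, rfl⟩
    exact (finToOne_blockIndex hn h0).infinite_image (hinf x hx)
  · intro hy
    have hsurj : Function.Surjective (blockIndex n) := fun k =>
      ⟨n k, (blockIndex_eq_iff hn h0).2 ⟨le_rfl, hn (Nat.lt_succ_self k)⟩⟩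
    refine ⟨blockIndex n ⁻¹' y, hblocks _ (hy.mono fun k hk i hi => ?_), image_preimage_eq y hsurj⟩
    rwa [mem_preimage, (blockIndex_eq_iff hn h0).2 hi]

end blockIndex

theorem mem_Ico_of_apply_eq {h n : ℕ → ℕ} (hsep : ∀ k i j, n (k + 1) ≤ i → j < n k → h j < h i)
    {k i j : ℕ} (hi : i ∈ Ico (n (k + 1)) (n (k + 2))) (hij : h i = h j) :
    j ∈ Ico (n k) (n (k + 3)) :=
  ⟨not_lt.1 fun hj => (hsep k i j hi.1 hj).ne' hij,
    not_le.1 fun hj => (hsep (k + 2) j i hj hi.2).ne hij⟩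

theorem toCantor_image_mem_residual_of_imgFam_eq {F : Set (Set ℕ)} {h : ℕ → ℕ}
    (hup : ∀ x ∈ F, ∀ y : Set ℕ, x ⊆ y → y ∈ F) (hh : FinToOne h)
    (himg : imgFam h F = {y | y.Infinite}) :
    toCantor '' F ∈ residual (ℕ → Bool) := by
  obtain ⟨n, hn, -, hsep⟩ := exists_strictMono_forall_succ fun (_ N : ℕ) => hh.exists_lt_apply N
  refine Filter.mem_of_superset
    (setOf_infinite_blocks_eq_true_mem_residual n (fun k => n (k + 3)) hn.id_le) fun f hf => ?_
  set A := {k | ∀ i ∈ Ico (n k) (n (k + 3)), f i = true}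
  have hB : (⋃ k ∈ A, Ico (n (k + 1)) (n (k + 2))).Infinite :=
    (hf.image (hn.injective.comp (add_left_injective 1)).injOn).mono <| by
      rintro _ ⟨k, hk, rfl⟩
      exact mem_biUnion hk ⟨le_rfl, hn (Nat.lt_succ_self _)⟩
  obtain ⟨a, ha, hab⟩ : h '' (⋃ k ∈ A, Ico (n (k + 1)) (n (k + 2))) ∈ imgFam h F :=
    himg ▸ hh.infinite_image hB
  refine ⟨{i | f i = true}, hup a ha _ fun j hj => ?_, toCantor_setOf f⟩
  obtain ⟨i, hiB, hij⟩ : h j ∈ h '' (⋃ k ∈ A, Ico (n (k + 1)) (n (k + 2))) :=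
    hab ▸ mem_image_of_mem h hj
  obtain ⟨k, hk, hik⟩ := mem_iUnion₂.1 hiB
  exact hk j (mem_Ico_of_apply_eq hsep hik hij)

/-- A semifilter `F` on ℕ is comeager in the Cantor space if and only if some
finite-to-one `h : ℕ → ℕ` maps it to the set of all infinite subsets of ℕ. -/
theorem stmt_16 (F : Set (Set ℕ)) (hF : IsSemifilter F) :
    IsMeagre ((toCantor '' F)ᶜ) ↔
      ∃ h : ℕ → ℕ, FinToOne h ∧ imgFam h F = {y : Set ℕ | y.Infinite} := by
  rw [IsMeagre, compl_compl]
  constructor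
  · intro hres
    obtain ⟨n, hn, h0, hblocks⟩ := exists_blocks_of_toCantor_image_mem_residual hF.2.2.1 hres
    exact ⟨blockIndex n, finToOne_blockIndex hn h0,
      imgFam_blockIndex hn h0 (fun _ => hF.infinite_of_mem) hblocks⟩
  · rintro ⟨h, hh, himg⟩
    exact toCantor_image_mem_residual_of_imgFam_eq hF.2.2.1 hh himg
end

section
/- Assume the Semifilter Trichotomy: for every semifilter F on ℕ there is a finite-to-one function h : ℕ → ℕ such that {h[x] : x ∈ F} is either the filter of cofinite subsets of ℕ, or a nonprincipal ultrafilter on ℕ, or the set of all infinite subsets of ℕ. Then every semifilter on ℕ which is a universally measurable subset of the Cantor space P(ω) has the property of Baire. -/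
open MeasureTheory Set
open scoped ENNReal

/-- A nonprincipal ultrafilter on ℕ: an ultrafilter containing no finite set. -/
def IsNonprincipalUltrafilterSet (G : Set (Set ℕ)) : Prop :=
  IsUltrafilterSet G ∧ ∀ x ∈ G, x.Infinite

/-- The filter of cofinite subsets of ℕ. -/
def cofinFam : Set (Set ℕ) := {y : Set ℕ | yᶜ.Finite}

/-- The Semifilter Trichotomy: every semifilter on ℕ is mapped by a finite-to-one function
to the cofinite filter, a nonprincipal ultrafilter, or the set of all infinite sets. -/
def SemifilterTrichotomy : Prop :=
  ∀ F : Set (Set ℕ), IsSemifilter F →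
    ∃ h : ℕ → ℕ, FinToOne h ∧
      (imgFam h F = cofinFam ∨ IsNonprincipalUltrafilterSet (imgFam h F) ∨
        imgFam h F = {y : Set ℕ | y.Infinite})

lemma toCantor_image (F : Set (Set ℕ)) :
    toCantor '' F = {a : ℕ → Bool | {n | a n = true} ∈ F} := by
  ext a
  constructor
  · rintro ⟨x, hx, rfl⟩
    have : {n | toCantor x n = true} = x := by
      ext n; simp [toCantor]
    simpa [this] using hx
  · intro ha
    refine ⟨{n | a n = true}, ha, ?_⟩
    funext n
    cases hb : a n <;> simp [toCantor, hb]

lemma range_infinite {h : ℕ → ℕ} (hfin : FinToOne h) : (Set.range h).Infinite := by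
  intro hf
  have : (Set.univ : Set ℕ).Finite := by
    have : (Set.univ : Set ℕ) ⊆ ⋃ n ∈ Set.range h, h ⁻¹' {n} := by
      intro m _; exact Set.mem_biUnion (Set.mem_range_self m) rfl
    exact (hf.biUnion fun n _ => hfin n).subset this
  exact Set.infinite_univ this

/-- extraction of a finite-coordinate neighborhood basis element -/
lemma nhds_basis_extract {a : ℕ → Bool} {s : Set (ℕ → Bool)} (hs : s ∈ nhds a) :
    ∃ I : Set ℕ, I.Finite ∧ {b : ℕ → Bool | ∀ i ∈ I, b i = a i} ⊆ s := by
  rw [nhds_pi, Filter.mem_pi] at hs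
  obtain ⟨I, hIfin, t, ht, hsub⟩ := hs
  refine ⟨I, hIfin, fun b hb => hsub ?_⟩
  intro i hi
  have := ht i
  rw [nhds_discrete, Filter.mem_pure] at this
  rw [hb i hi]; exact this

lemma case1_meagre (h : ℕ → ℕ) (hfin : FinToOne h) (F : Set (Set ℕ))
    (hcof : ∀ x ∈ F, ((h '' x)ᶜ : Set ℕ).Finite) :
    IsMeagre (toCantor '' F) := by
  set A : ℕ → Set (ℕ → Bool) :=
    fun k => {a | ∀ n, k ≤ n → ∃ m, h m = n ∧ a m = true} with hA
  have hsub : toCantor '' F ⊆ ⋃ k, A k := by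
    rw [toCantor_image]
    intro a ha
    have hfin' := hcof _ ha
    obtain ⟨k, hk⟩ := hfin'.bddAbove
    refine Set.mem_iUnion.mpr ⟨k + 1, fun n hn => ?_⟩
    have hnx : n ∈ h '' {n | a n = true} := by
      by_contra hc
      exact absurd (hk hc) (by omega)
    obtain ⟨m, hm, hme⟩ := hnx
    exact ⟨m, hme, hm⟩
  refine (isMeagre_iUnion fun k => ?_).mono hsub
  -- each A k is closed with empty interior
  have hclosed : IsClosed (A k) := by
    have : A k = ⋂ n ∈ {n : ℕ | k ≤ n}, {a : ℕ → Bool | ∃ m ∈ h ⁻¹' {n}, a m = true} := by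
      ext a; simp only [hA, Set.mem_setOf_eq, Set.mem_iInter]
      constructor
      · intro ha n hn; obtain ⟨m, h1, h2⟩ := ha n hn; exact ⟨m, h1, h2⟩
      · intro ha n hn; obtain ⟨m, h1, h2⟩ := ha n hn; exact ⟨m, h1, h2⟩
    rw [this]
    refine isClosed_biInter fun n _ => ?_
    have : {a : ℕ → Bool | ∃ m ∈ h ⁻¹' {n}, a m = true}
        = ⋃ m ∈ h ⁻¹' {n}, (fun a : ℕ → Bool => a m) ⁻¹' {true} := by
      ext a; simp
    rw [this]
    exact (hfin n).isClosed_biUnion fun m _ =>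
      (isClosed_discrete _).preimage (continuous_apply m)
  have hint : interior (A k) = ∅ := by
    rw [Set.eq_empty_iff_forall_notMem]
    intro a ha
    obtain ⟨I, hIfin, hIsub⟩ := nhds_basis_extract (mem_interior_iff_mem_nhds.mp ha)
    have hsub2 : A k ⊆ A k := subset_rfl
    -- pick n ≥ k in range h with fiber disjoint from I
    have hinf : ((Set.range h) \ (h '' I ∪ {n | n < k})).Infinite :=
      (range_infinite hfin).diff ((hIfin.image h).union (Set.finite_lt_nat k))
    obtain ⟨n, hn⟩ := hinf.nonempty
    obtain ⟨hnr, hnI⟩ := hn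
    simp only [Set.mem_union, Set.mem_setOf_eq, not_or, not_lt] at hnI
    obtain ⟨hnI1, hnk⟩ := hnI
    set b : ℕ → Bool := fun m => if h m = n then false else a m with hb
    have hbmem : b ∈ A k := by
      apply hIsub
      intro i hi
      have : h i ≠ n := fun hc => hnI1 ⟨i, hi, hc⟩
      simp [hb, this]
    obtain ⟨m, hm1, hm2⟩ := hbmem n hnk
    simp [hb, hm1] at hm2
  rw [IsMeagre]
  exact residual_of_dense_open hclosed.isOpen_compl
    (by rw [← interior_eq_empty_iff_dense_compl]; exact hint)

lemma case3_comeagre (h : ℕ → ℕ) (hfin : FinToOne h) (F : Set (Set ℕ))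
    (hup : ∀ x ∈ F, ∀ y : Set ℕ, x ⊆ y → y ∈ F)
    (hinf : ∀ y : Set ℕ, y.Infinite → ∃ z ∈ F, h '' z = y) :
    IsMeagre ((toCantor '' F)ᶜ) := by
  rw [IsMeagre, compl_compl]
  set V : ℕ → Set (ℕ → Bool) :=
    fun k => ⋃ n ∈ {n : ℕ | k ≤ n}, {a : ℕ → Bool | ∀ m, h m = n → a m = true} with hV
  have hVmem : ∀ k, V k ∈ residual (ℕ → Bool) := by
    intro k
    apply residual_of_dense_open
    · refine isOpen_biUnion fun n _ => ?_
      have : {a : ℕ → Bool | ∀ m, h m = n → a m = true}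
          = ⋂ m ∈ h ⁻¹' {n}, (fun a : ℕ → Bool => a m) ⁻¹' {true} := by
        ext a; simp
      rw [this]
      exact (hfin n).isOpen_biInter fun m _ =>
        (isOpen_discrete _).preimage (continuous_apply m)
    · rw [dense_iff_inter_open]
      rintro U hU ⟨a, ha⟩
      obtain ⟨I, hIfin, hIsub⟩ := nhds_basis_extract (hU.mem_nhds ha)
      have hne : (({n : ℕ | k ≤ n}) \ (h '' I)).Infinite :=
        (Set.Ici_infinite k).diff (hIfin.image h)
      obtain ⟨n, hn1, hn2⟩ := hne.nonempty
      refine ⟨fun m => if h m = n then true else a m, hIsub ?_, ?_⟩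
      · intro i hi
        have : h i ≠ n := fun hc => hn2 ⟨i, hi, hc⟩
        simp [this]
      · refine Set.mem_biUnion hn1 ?_
        intro m hm; simp [hm]
  have hDsub : (⋂ k, V k) ⊆ toCantor '' F := by
    rw [toCantor_image]
    intro a ha
    set y : Set ℕ := {n | ∀ m, h m = n → a m = true} with hy
    have hyinf : y.Infinite := by
      apply Set.infinite_of_not_bddAbove
      rintro ⟨k, hk⟩
      have := Set.mem_iInter.mp ha (k + 1)
      obtain ⟨n, hn1, hn2⟩ := Set.mem_iUnion₂.mp this
      have : n ≤ k := hk hn2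
      simp only [Set.mem_setOf_eq] at hn1
      omega
    obtain ⟨z, hz, hzy⟩ := hinf y hyinf
    refine hup z hz _ ?_
    intro m hm
    have : h m ∈ y := hzy ▸ Set.mem_image_of_mem h hm
    exact this m rfl
  exact Filter.mem_of_superset (countable_iInter_mem.mpr hVmem) hDsub

/-! ### Case 2: nonprincipal ultrafilter image -/

section ultra
variable {U : Set (Set ℕ)}

lemma ultra_compl_notmem (hU : IsNonprincipalUltrafilterSet U) : ∀ y : Set ℕ, y ∈ U ↔ yᶜ ∉ U := by
  intro y
  constructor
  · intro hy hyc
    have := hU.1.1.2.2.2 y hy yᶜ hyc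
    rw [Set.inter_compl_self] at this
    exact hU.1.1.2.1 this
  · intro hyc
    rcases hU.1.2 y with hy | hy
    · exact hy
    · exact absurd hy hyc

lemma ultra_finite_symmDiff (hU : IsNonprincipalUltrafilterSet U) : ∀ x ∈ U, ∀ y : Set ℕ, (symmDiff x y).Finite → y ∈ U := by
  intro x hx y hfin
  have hsc : (symmDiff x y)ᶜ ∈ U := by
    rcases hU.1.2 (symmDiff x y) with hs | hs
    · exact absurd (hU.2 _ hs) (by simpa using hfin)
    · exact hs
  have hxy : x ∩ (symmDiff x y)ᶜ ∈ U := hU.1.1.2.2.2 x hx _ hsc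
  refine hU.1.1.2.2.1 _ hxy y ?_
  intro m hm
  rcases hm with ⟨hmx, hms⟩
  by_contra hmy
  exact hms (by simp [symmDiff, Set.mem_union]; tauto)

end ultra

section key
variable {h : ℕ → ℕ} {F : Set (Set ℕ)}

lemma preimage_mem_iff (hup : ∀ x ∈ F, ∀ y : Set ℕ, x ⊆ y → y ∈ F)
    (hUup : ∀ x ∈ imgFam h F, ∀ y : Set ℕ, x ⊆ y → y ∈ imgFam h F) (y : Set ℕ) :
    h ⁻¹' y ∈ F ↔ y ∈ imgFam h F := by
  constructor
  · intro hy
    have : h '' (h ⁻¹' y) ∈ imgFam h F := ⟨_, hy, rfl⟩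
    exact hUup _ this y (Set.image_preimage_subset h y)
  · rintro ⟨z, hz, rfl⟩
    exact hup z hz _ (Set.subset_preimage_image h z)

end key

/-! ### measure machinery on `ℕ → ZMod 2` -/

abbrev G2 : Type := ℕ → ZMod 2

noncomputable def K0 : TopologicalSpace.PositiveCompacts G2 :=
  ⟨⟨Set.univ, isCompact_univ⟩, by simp⟩

noncomputable def Hm : Measure G2 := Measure.addHaarMeasure K0

instance : IsProbabilityMeasure Hm :=
  ⟨by simpa [Hm, K0] using Measure.addHaarMeasure_self (K₀ := K0)⟩

instance : Hm.IsAddLeftInvariant := by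
  unfold Hm; infer_instance

lemma Hm_pre (δ : G2) (s : Set G2) : Hm ((fun g => δ + g) ⁻¹' s) = Hm s := by
  have h1 : MeasurePreserving (⇑(MeasurableEquiv.addLeft δ)) Hm Hm :=
    measurePreserving_add_left Hm δ
  exact h1.measure_preimage_equiv s

/-- the basic cylinder over a finset with prescribed values -/
def Ecyl (s : Finset ℕ) (f : ∀ i : s, ZMod 2) : Set G2 := {g | ∀ i : s, g i = f i}

lemma Ecyl_measurable (s : Finset ℕ) (f : ∀ i : s, ZMod 2) : MeasurableSet (Ecyl s f) := by
  have : Ecyl s f = ⋂ i : s, (fun g : G2 => g i) ⁻¹' {f i} := by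
    ext g; simp [Ecyl]
  rw [this]
  exact MeasurableSet.iInter fun i => (measurable_pi_apply _) (by simp)

lemma Ecyl_disjoint (s : Finset ℕ) {f f' : ∀ i : s, ZMod 2} (hff : f ≠ f') :
    Disjoint (Ecyl s f) (Ecyl s f') := by
  rw [Set.disjoint_left]
  intro g hg hg'
  exact hff (funext fun i => (hg i).symm.trans (hg' i))

lemma Ecyl_iUnion (s : Finset ℕ) : ⋃ f : ∀ i : s, ZMod 2, Ecyl s f = Set.univ := by
  ext g
  simp only [Set.mem_iUnion, Set.mem_univ, iff_true]
  exact ⟨fun i => g i, fun i => rfl⟩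

/-- the finitely supported shift carrying `Ecyl s f'` onto `Ecyl s f` -/
noncomputable def shiftOf (s : Finset ℕ) (f f' : ∀ i : s, ZMod 2) : G2 :=
  fun n => if hn : n ∈ s then f ⟨n, hn⟩ - f' ⟨n, hn⟩ else 0

lemma shiftOf_support (s : Finset ℕ) (f f' : ∀ i : s, ZMod 2) :
    (Function.support (shiftOf s f f')).Finite := by
  apply (s.finite_toSet).subset
  intro n hn
  by_contra hns
  exact hn (by simp [shiftOf, (by simpa using hns : ¬ n ∈ s)])

lemma shiftOf_apply (s : Finset ℕ) (f f' : ∀ i : s, ZMod 2) (i : s) :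
    shiftOf s f f' (i : ℕ) = f i - f' i := by
  simp [shiftOf, i.2]

lemma zmod2_aux : ∀ a b x : ZMod 2, a - b + x = a ↔ x = b := by decide

lemma shiftOf_pre (s : Finset ℕ) (f f' : ∀ i : s, ZMod 2) :
    (fun g => (shiftOf s f f') + g) ⁻¹' Ecyl s f = Ecyl s f' := by
  ext g
  simp only [Set.mem_preimage, Ecyl, Set.mem_setOf_eq, Pi.add_apply]
  refine forall_congr' fun i => ?_
  rw [shiftOf_apply]
  exact zmod2_aux (f i) (f' i) (g i)

lemma key_measure {W : Set G2}
    (hW : ∀ δ : G2, (Function.support δ).Finite → (fun g => δ + g) ⁻¹' W = W)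
    (s : Finset ℕ) (f f' : ∀ i : s, ZMod 2) :
    Hm (W ∩ Ecyl s f') = Hm (W ∩ Ecyl s f) := by
  have hpre := Hm_pre (shiftOf s f f') (W ∩ Ecyl s f)
  rw [Set.preimage_inter, hW _ (shiftOf_support s f f'), shiftOf_pre] at hpre
  exact hpre

lemma sum_measure {B : Set G2} (hB : MeasurableSet B) (s : Finset ℕ) :
    Hm B = ∑' f : ∀ i : s, ZMod 2, Hm (B ∩ Ecyl s f) := by
  have h1 : B = ⋃ f : ∀ i : s, ZMod 2, B ∩ Ecyl s f := by
    rw [← Set.inter_iUnion, Ecyl_iUnion, Set.inter_univ]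
  calc Hm B = Hm (⋃ f : ∀ i : s, ZMod 2, B ∩ Ecyl s f) := by rw [← h1]
    _ = ∑' f : ∀ i : s, ZMod 2, Hm (B ∩ Ecyl s f) :=
      measure_iUnion
        (fun f f' hff =>
          ((Ecyl_disjoint s hff).mono Set.inter_subset_right Set.inter_subset_right))
        (fun f => hB.inter (Ecyl_measurable s f))

lemma cylinder_eq_biUnion (s : Finset ℕ) (S : Set (∀ i : s, ZMod 2)) :
    cylinder s S = ⋃ f ∈ S, Ecyl s f := by
  ext g
  simp only [mem_cylinder, Set.mem_iUnion, Ecyl, Set.mem_setOf_eq]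
  constructor
  · intro hg; exact ⟨s.restrict g, hg, fun i => rfl⟩
  · rintro ⟨f, hf, hgf⟩
    have h2 : s.restrict g = f := funext hgf
    exact h2 ▸ hf

lemma indep_restrict (W B : Set G2) (hB : MeasurableSet B) (hae : W =ᵐ[Hm] B)
    (hWinv : ∀ δ : G2, (Function.support δ).Finite → (fun g => δ + g) ⁻¹' W = W) :
    Hm.restrict B = (Hm B) • Hm := by
  refine ext_of_generate_finite (measurableCylinders (fun _ : ℕ => ZMod 2))
    generateFrom_measurableCylinders.symm isPiSystem_measurableCylinders ?_ ?_
  · intro t ht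
    have hmeasc : MeasurableSet t := MeasurableSet.of_mem_measurableCylinders ht
    obtain ⟨s, S, hS, rfl⟩ := (mem_measurableCylinders t).mp ht
    have hBE : ∀ f : ∀ i : s, ZMod 2, Hm (B ∩ Ecyl s f) = Hm (W ∩ Ecyl s f) :=
      fun f => measure_congr (Filter.EventuallyEq.inter hae.symm Filter.EventuallyEq.rfl)
    have f0 : ∀ i : s, ZMod 2 := fun _ => 0
    have hBconst : ∀ f, Hm (B ∩ Ecyl s f) = Hm (B ∩ Ecyl s f0) := by
      intro f
      rw [hBE f, hBE f0, key_measure hWinv s f0 f]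
    have hEconst : ∀ f, Hm (Ecyl s f) = Hm (Ecyl s f0) := by
      intro f
      have huniv : ∀ δ : G2, (Function.support δ).Finite →
          (fun g => δ + g) ⁻¹' (Set.univ : Set G2) = Set.univ := fun δ _ => by simp
      have := key_measure huniv s f0 f
      simpa using this
    set u := Hm (B ∩ Ecyl s f0) with hu
    set v := Hm (Ecyl s f0) with hv
    set N := Fintype.card ((i : s) → ZMod 2) with hN
    have hsumB : Hm B = N * u := by
      rw [sum_measure hB s, tsum_fintype,
        Finset.sum_congr rfl (fun f _ => hBconst f), Finset.sum_const, Finset.card_univ,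
        nsmul_eq_mul]
    have hsum1 : (1 : ENNReal) = N * v := by
      have h2 := sum_measure MeasurableSet.univ s
      rw [measure_univ, tsum_fintype,
        Finset.sum_congr rfl (fun f _ => by rw [Set.univ_inter, hEconst f]), Finset.sum_const,
        Finset.card_univ, nsmul_eq_mul] at h2
      exact h2
    have hSfin : S.Finite := S.toFinite
    have hcylU : cylinder s S = ⋃ f ∈ hSfin.toFinset, Ecyl s f := by
      rw [cylinder_eq_biUnion]; ext g; simp
    have hdisj : (hSfin.toFinset : Set (∀ i : s, ZMod 2)).PairwiseDisjoint
        (fun f => Ecyl s f ∩ B) := by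
      intro f _ f' _ hff
      exact (Ecyl_disjoint s hff).mono Set.inter_subset_left Set.inter_subset_left
    have hdisj2 : (hSfin.toFinset : Set (∀ i : s, ZMod 2)).PairwiseDisjoint
        (fun f => Ecyl s f) := by
      intro f _ f' _ hff
      exact Ecyl_disjoint s hff
    have hCB : Hm (cylinder s S ∩ B) = (hSfin.toFinset.card : ENNReal) * u := by
      rw [hcylU, Set.iUnion₂_inter,
        measure_biUnion_finset hdisj (fun f _ => (Ecyl_measurable s f).inter hB),
        Finset.sum_congr rfl (fun f _ => by rw [Set.inter_comm, hBconst f]),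
        Finset.sum_const, nsmul_eq_mul]
    have hC : Hm (cylinder s S) = (hSfin.toFinset.card : ENNReal) * v := by
      rw [hcylU, measure_biUnion_finset hdisj2 (fun f _ => Ecyl_measurable s f),
        Finset.sum_congr rfl (fun f _ => hEconst f), Finset.sum_const, nsmul_eq_mul]
    rw [Measure.restrict_apply hmeasc, hCB, Measure.smul_apply, smul_eq_mul, hC, hsumB]
    calc (hSfin.toFinset.card : ENNReal) * u
        = ((hSfin.toFinset.card : ENNReal) * u) * 1 := by rw [mul_one]
      _ = ((hSfin.toFinset.card : ENNReal) * u) * ((N : ENNReal) * v) := by rw [← hsum1]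
      _ = (N : ENNReal) * u * ((hSfin.toFinset.card : ENNReal) * v) := by ring
  · rw [Measure.restrict_apply_univ, Measure.smul_apply, smul_eq_mul, measure_univ, mul_one]

lemma case2_false (h : ℕ → ℕ) (F : Set (Set ℕ))
    (hup : ∀ x ∈ F, ∀ y : Set ℕ, x ⊆ y → y ∈ F)
    (hU : IsNonprincipalUltrafilterSet (imgFam h F))
    (hUM : UMSet (toCantor '' F)) : False := by
  classical
  set U := imgFam h F with hUdef
  set W : Set G2 := {g : G2 | {n | g n = 1} ∈ U} with hWdef
  have hWinv : ∀ δ : G2, (Function.support δ).Finite → (fun g => δ + g) ⁻¹' W = W := by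
    intro δ hδ
    have hsym : ∀ g : G2, (symmDiff {n | (δ + g) n = 1} {n | g n = 1} : Set ℕ).Finite := by
      intro g
      refine hδ.subset fun n hn => ?_
      rw [Set.mem_symmDiff] at hn
      rw [Function.mem_support]
      intro h0
      simp only [Set.mem_setOf_eq, Pi.add_apply, h0, zero_add] at hn
      tauto
    ext g
    simp only [Set.mem_preimage, hWdef, Set.mem_setOf_eq]
    constructor
    · intro hg
      exact ultra_finite_symmDiff hU _ hg _ (hsym g)
    · intro hg
      refine ultra_finite_symmDiff hU _ hg _ ?_
      rw [symmDiff_comm]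
      exact hsym g
  set Ψ : G2 → (ℕ → Bool) := fun g n => decide (g (h n) = 1) with hΨ
  have hΨcont : Continuous Ψ := by
    apply continuous_pi
    intro n
    have hc : Continuous (fun v : ZMod 2 => decide (v = 1)) := continuous_of_discreteTopology
    exact hc.comp (continuous_apply (h n))
  have hΨmeas : Measurable Ψ := hΨcont.measurable
  have hUup : ∀ x ∈ U, ∀ y : Set ℕ, x ⊆ y → y ∈ U := hU.1.1.2.2.1
  have hpre : Ψ ⁻¹' (toCantor '' F) = W := by
    rw [toCantor_image]
    ext g
    simp only [Set.mem_preimage, Set.mem_setOf_eq, hΨ, hWdef]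
    have h1 : {n | decide (g (h n) = 1) = true} = h ⁻¹' {n | g n = 1} := by
      ext n; simp
    rw [h1]
    exact preimage_mem_iff hup hUup {n | g n = 1}
  have hbor : (inferInstance : MeasurableSpace (ℕ → Bool)) = borel (ℕ → Bool) :=
    BorelSpace.measurable_eq
  unfold UMSet at hUM
  rw [← hbor] at hUM
  set μ : Measure (ℕ → Bool) := Hm.map Ψ with hμ
  haveI : IsProbabilityMeasure μ := Measure.isProbabilityMeasure_map hΨmeas.aemeasurable
  have hNMC : NullMeasurableSet (toCantor '' F) μ := hUM μ inferInstance
  have hNM : NullMeasurableSet W Hm := by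
    rw [← hpre]
    exact hNMC.preimage (hΨmeas.quasiMeasurePreserving Hm)
  set B := toMeasurable Hm W with hBdef
  have hBmeas : MeasurableSet B := measurableSet_toMeasurable Hm W
  have hae : W =ᵐ[Hm] B := (hNM.toMeasurable_ae_eq).symm
  have hWB : Hm W = Hm B := measure_congr hae
  have hsq : Hm B = Hm B * Hm B := by
    have h2 := indep_restrict W B hBmeas hae hWinv
    have h3 := congrArg (fun m : Measure G2 => m B) h2
    simpa [Measure.restrict_apply hBmeas, Measure.smul_apply, smul_eq_mul,
      Set.inter_self] using h3
  have hcompl : (fun g : G2 => (fun _ : ℕ => (1 : ZMod 2)) + g) ⁻¹' W = Wᶜ := by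
    ext g
    simp only [Set.mem_preimage, Set.mem_compl_iff, hWdef, Set.mem_setOf_eq]
    have h1 : {n | ((fun _ : ℕ => (1 : ZMod 2)) + g) n = 1} = {n | g n = 1}ᶜ := by
      ext n
      simp only [Pi.add_apply, Set.mem_compl_iff, Set.mem_setOf_eq]
      have h2 : ∀ v : ZMod 2, (1 + v = 1 ↔ ¬ v = 1) := by decide
      exact h2 (g n)
    rw [h1]
    constructor
    · intro hc hy
      exact (ultra_compl_notmem hU {n | g n = 1}).mp hy hc
    · intro hy
      have h3 := ultra_compl_notmem hU ({n | g n = 1}ᶜ)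
      rw [compl_compl] at h3
      exact h3.mpr hy
  have hWc : Hm Wᶜ = Hm W := by rw [← hcompl, Hm_pre]
  have hsum : Hm W + Hm Wᶜ = 1 := by
    rw [measure_add_measure_compl₀ hNM, measure_univ]
  rw [hWc, hWB] at hsum
  have hb1 : Hm B ≤ 1 := prob_le_one
  have hbtop : Hm B ≠ ∞ := (lt_of_le_of_lt hb1 ENNReal.one_lt_top).ne
  have hb0 : Hm B ≠ 0 := by
    intro h0
    rw [h0] at hsum
    simp at hsum
  have hbone : Hm B = 1 := by
    have h4 : Hm B * 1 = Hm B * Hm B := by rw [mul_one]; exact hsq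
    exact ((ENNReal.mul_right_inj hb0 hbtop).mp h4).symm
  rw [hbone] at hsum
  norm_num at hsum


/-- The Semifilter Trichotomy implies that universally measurable semifilters on ℕ have
the property of Baire. -/
theorem stmt_17 (ST : SemifilterTrichotomy) :
    ∀ F : Set (Set ℕ), IsSemifilter F → UMSet (toCantor '' F) →
      HasBaireProperty (toCantor '' F) := by
  intro F hF hUM
  obtain ⟨h, hfin, htri⟩ := ST F hF
  obtain ⟨hne, hproper, hup, hfinmod⟩ := hF
  rcases htri with h1 | h2 | h3
  · refine ⟨∅, isOpen_empty, ?_⟩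
    have he : symmDiff (toCantor '' F) (∅ : Set (ℕ → Bool)) = toCantor '' F := by
      simp [symmDiff]
    rw [he]
    refine case1_meagre h hfin F fun x hx => ?_
    have hx2 : h '' x ∈ cofinFam := h1 ▸ ⟨x, hx, rfl⟩
    exact hx2
  · exact (case2_false h F hup h2 hUM).elim
  · refine ⟨Set.univ, isOpen_univ, ?_⟩
    have he : symmDiff (toCantor '' F) (Set.univ : Set (ℕ → Bool)) = (toCantor '' F)ᶜ := by
      simp [symmDiff, Set.compl_eq_univ_diff]
    rw [he]
    refine case3_comeagre h hfin F hup fun y hy => ?_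
    have hy2 : y ∈ imgFam h F := h3 ▸ hy
    obtain ⟨z, hz, hzy⟩ := hy2
    exact ⟨z, hz, hzy⟩
end
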